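/- arXiv:1107.2173 — 11 statements merged into one kernel-verified Lean document; each statement's English description precedes it below -/
import Mathlib

section
/- Let G be an N×N Hermitian complex matrix (N ≥ 1). Let {λ_n}_{n=1}^N be the eigenvalues of G counted with multiplicity and listed in nonincreasing order, and let {μ_n}_{n=1}^N be the (necessarily real) diagonal entries of G listed in nonincreasing order. Then {λ_n}_{n=1}^N majorizes {μ_n}_{n=1}^N. -/
/-!
Write `G = U D U*` with `U` unitary and `D` the diagonal of eigenvalues. Then
`G j j = ∑ m, |U j m|² λ m`, so the diagonal is the image of the eigenvalue vector under the
doubly stochastic matrix `(|U j m|²)`. Such a matrix preserves the total sum, and the sum of any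
`k` coordinates of its image is a combination of the `λ m` with weights in `[0, 1]` adding up
to `k`, hence at most the sum of the `k` largest eigenvalues.
-/

open Finset Matrix

theorem Matrix.map_normSq_mem_doublyStochastic {n : Type*} [Fintype n] [DecidableEq n]
    {U : Matrix n n ℂ} (hU : U ∈ unitaryGroup n ℂ) :
    U.map Complex.normSq ∈ doublyStochastic ℝ n := by
  refine mem_doublyStochastic_iff_sum.mpr ⟨fun _ _ => Complex.normSq_nonneg _, fun i => ?_,
    fun j => ?_⟩
  · have h := congr_fun₂ (mem_unitaryGroup_iff.mp hU) i i
    simp only [mul_apply, star_apply, one_apply_eq, Complex.star_def, Complex.mul_conj] at h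
    exact_mod_cast h
  · have h := congr_fun₂ (mem_unitaryGroup_iff'.mp hU) j j
    simp only [mul_apply, star_apply, one_apply_eq, Complex.star_def, mul_comm (starRingEnd ℂ _),
      Complex.mul_conj] at h
    exact_mod_cast h

theorem Matrix.IsHermitian.re_diag_eq_mulVec_eigenvalues {n : Type*} [Fintype n] [DecidableEq n]
    {G : Matrix n n ℂ} (hG : G.IsHermitian) :
    (fun j => (G j j).re) =
      (hG.eigenvectorUnitary : Matrix n n ℂ).map Complex.normSq *ᵥ hG.eigenvalues := by
  funext j
  set U : Matrix n n ℂ := (hG.eigenvectorUnitary : Matrix n n ℂ)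
  have hdiag : G j j = ((∑ m, Complex.normSq (U j m) * hG.eigenvalues m : ℝ) : ℂ) := by
    conv_lhs => rw [hG.spectral_theorem, Unitary.conjStarAlgAut_apply]
    rw [mul_apply, Complex.ofReal_sum]
    refine sum_congr rfl fun m _ => ?_
    rw [mul_diagonal, star_apply, Function.comp_apply, Complex.star_def, Complex.ofReal_mul,
      ← Complex.mul_conj]
    exact mul_right_comm _ _ _
  rw [hdiag, Complex.ofReal_re]
  rfl

theorem sum_mul_le_sum_of_threshold {ι : Type*} [Fintype ι] (S : Finset ι) {lam d : ι → ℝ}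
    (t : ℝ) (hS : ∀ i ∈ S, t ≤ lam i) (hSc : ∀ i ∉ S, lam i ≤ t) (hd0 : ∀ i, 0 ≤ d i)
    (hd1 : ∀ i, d i ≤ 1) (hd : ∑ i, d i = #S) :
    ∑ i, lam i * d i ≤ ∑ i ∈ S, lam i := by
  classical
  have hterm : ∀ i, (lam i - t) * (d i - if i ∈ S then 1 else 0) ≤ 0 := by
    intro i
    by_cases hi : i ∈ S
    · simp only [hi, if_true]
      exact mul_nonpos_of_nonneg_of_nonpos (by linarith [hS i hi]) (by linarith [hd1 i])
    · simp only [hi, if_false, sub_zero]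
      exact mul_nonpos_of_nonpos_of_nonneg (by linarith [hSc i hi]) (hd0 i)
  have hexpand : ∑ i, (lam i - t) * (d i - if i ∈ S then 1 else 0) =
      ∑ i, lam i * d i - ∑ i ∈ S, lam i - t * (∑ i, d i - #S) := by
    simp only [mul_sub, sub_mul, mul_ite, mul_one, mul_zero, sum_sub_distrib, ← mul_sum,
      sum_ite_mem, univ_inter, sum_const, nsmul_eq_mul]
    ring
  have hsum := sum_nonpos fun i (_ : i ∈ univ) => hterm i
  rw [hexpand, hd] at hsum
  linarith

theorem sum_Iio_mulVec_le_of_mem_doublyStochastic {ι : Type*} [Fintype ι] [DecidableEq ι]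
    [LinearOrder ι] [LocallyFiniteOrderBot ι] {M : Matrix ι ι ℝ}
    (hM : M ∈ doublyStochastic ℝ ι) {lam : ι → ℝ} (hlam : Antitone lam) (a : ι) :
    ∑ i ∈ Iio a, (M *ᵥ lam) i ≤ ∑ i ∈ Iio a, lam i := by
  have hswap : ∑ i ∈ Iio a, (M *ᵥ lam) i = ∑ j, lam j * ∑ i ∈ Iio a, M i j := by
    simp only [mulVec, dotProduct, mul_sum]
    rw [sum_comm]
    simp only [mul_comm (lam _)]
  have hweight_le_one (j : ι) : ∑ i ∈ Iio a, M i j ≤ 1 :=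
    (sum_le_sum_of_subset_of_nonneg (subset_univ _) fun _ _ _ =>
      nonneg_of_mem_doublyStochastic hM).trans_eq (sum_col_of_mem_doublyStochastic hM j)
  have hweight_sum : ∑ j, ∑ i ∈ Iio a, M i j = #(Iio a) := by
    rw [sum_comm]
    simp [sum_row_of_mem_doublyStochastic hM]
  rw [hswap]
  exact sum_mul_le_sum_of_threshold _ (lam a) (fun i hi => hlam (mem_Iio.mp hi).le)
    (fun i hi => hlam (not_lt.mp (mem_Iio.not.mp hi)))
    (fun j => sum_nonneg fun i _ => nonneg_of_mem_doublyStochastic hM) hweight_le_one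
    hweight_sum

theorem schur_majorization_general {N : ℕ}
    (G : Matrix (Fin N) (Fin N) ℂ) (hG : G.IsHermitian)
    (lam mu : Fin N → ℝ)
    (hlam_anti : ∀ i j : Fin N, i ≤ j → lam j ≤ lam i)
    (σ : Equiv.Perm (Fin N)) (hlam : ∀ i, lam i = hG.eigenvalues (σ i))
    (τ : Equiv.Perm (Fin N)) (hmu : ∀ i, mu i = (G (τ i) (τ i)).re) :
    (∀ k : ℕ, 1 ≤ k → k < N →
      ∑ i ∈ Finset.univ.filter (fun i : Fin N => (i : ℕ) < k), mu i ≤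
      ∑ i ∈ Finset.univ.filter (fun i : Fin N => (i : ℕ) < k), lam i) ∧
    ∑ i, lam i = ∑ i, mu i := by
  set W := ((hG.eigenvectorUnitary : Matrix (Fin N) (Fin N) ℂ).map Complex.normSq).submatrix τ σ
  have hW : W ∈ doublyStochastic ℝ (Fin N) :=
    reindex_mem_doublyStochastic (e₁ := τ.symm) (e₂ := σ.symm)
      (map_normSq_mem_doublyStochastic hG.eigenvectorUnitary.2)
  have hmu_eq : mu = W *ᵥ lam := by
    have hlam_eq : lam = hG.eigenvalues ∘ σ := funext hlam
    rw [hlam_eq, submatrix_mulVec_equiv, Function.comp_assoc, Equiv.self_comp_symm,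
      Function.comp_id, ← hG.re_diag_eq_mulVec_eigenvalues]
    exact funext hmu
  refine ⟨fun k _ hk => ?_, by rw [hmu_eq, sum_mulVec_of_mem_doublyStochastic hW]⟩
  have hIio : univ.filter (fun i : Fin N => (i : ℕ) < k) = Iio ⟨k, hk⟩ := by
    ext i
    simp [Fin.lt_def]
  rw [hIio, hmu_eq]
  exact sum_Iio_mulVec_le_of_mem_doublyStochastic hW hlam_anti _

/-- Schur: the spectrum of a Hermitian matrix, listed in
nonincreasing order, majorizes its diagonal entries listed in nonincreasing
order. -/
theorem schur_majorization {N : ℕ} (hN : 1 ≤ N)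
    (G : Matrix (Fin N) (Fin N) ℂ) (hG : G.IsHermitian)
    (lam mu : Fin N → ℝ)
    (hlam_anti : ∀ i j : Fin N, i ≤ j → lam j ≤ lam i)
    (hmu_anti : ∀ i j : Fin N, i ≤ j → mu j ≤ mu i)
    (σ : Equiv.Perm (Fin N)) (hlam : ∀ i, lam i = hG.eigenvalues (σ i))
    (τ : Equiv.Perm (Fin N)) (hmu : ∀ i, mu i = (G (τ i) (τ i)).re) :
    (∀ k : ℕ, 1 ≤ k → k < N →
      ∑ i ∈ Finset.univ.filter (fun i : Fin N => (i : ℕ) < k), mu i ≤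
      ∑ i ∈ Finset.univ.filter (fun i : Fin N => (i : ℕ) < k), lam i) ∧
    ∑ i, lam i = ∑ i, mu i :=
  schur_majorization_general G hG lam mu hlam_anti σ hlam τ hmu
end

section
/- Let {λ_n}_{n=1}^N and {μ_n}_{n=1}^N be nonincreasing real sequences such that {λ_n}_{n=1}^N majorizes {μ_n}_{n=1}^N. Then there exists an N×N Hermitian complex matrix G whose eigenvalues, counted with multiplicity, are exactly {λ_n}_{n=1}^N and whose (n,n) diagonal entry equals μ_n for every n = 1,…,N. -/
/-!
Induction on `N`, following the classical construction. Since `μ₁ ≤ λ₁` and `λ_N ≤ μ₁`, there is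
a `k` with `λ_{k+1} ≤ μ₁ ≤ λ_k`. The real symmetric matrix `[[μ₁, x], [x, ρ]]` with
`ρ = λ_k + λ_{k+1} - μ₁` and `x² = (λ_k - μ₁)(μ₁ - λ_{k+1})` has eigenvalues `λ_k, λ_{k+1}`.
Merging `λ_k, λ_{k+1}` into the single value `ρ` leaves a nonincreasing sequence of length `N - 1`
that majorizes `μ₂, …, μ_N`, so by induction some Hermitian `B` has that spectrum and diagonal.
In the matrix `[[μ₁, x], [x, ρ]] ⊕ diag(rest)` the block complementary to the `μ₁` entry is the
diagonal matrix `diag(ρ, rest)`, which has the spectrum of `B` and is therefore unitarily similar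
to it; conjugating by `1 ⊕ U` replaces that block by `B` without changing `μ₁` or the spectrum.
Spectra are tracked as characteristic polynomials throughout.
-/

open Finset Matrix Polynomial

/-- The analogue of `Fin.succAbove` on `ℕ`: the increasing enumeration of `ℕ \ {p}`. -/
def Nat.succAbove (p i : ℕ) : ℕ := if i < p then i else i + 1

theorem Nat.succAbove_ne (p i : ℕ) : p.succAbove i ≠ p := by
  unfold Nat.succAbove; split_ifs <;> omega

theorem Nat.succAbove_self (p : ℕ) : p.succAbove p = p + 1 := by
  simp [Nat.succAbove]

@[to_additive]
theorem prod_range_succ_eq_mul_prod_succAbove {M : Type*} [CommMonoid M] (f : ℕ → M) {k n : ℕ}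
    (hk : k ≤ n) : ∏ i ∈ range (n + 1), f i = f k * ∏ i ∈ range n, f (k.succAbove i) := by
  induction n, hk using Nat.le_induction with
  | base =>
    rw [prod_range_succ, mul_comm]
    congr 1
    exact prod_congr rfl fun i hi => by rw [Nat.succAbove, if_pos (mem_range.1 hi)]
  | succ n hkn ih =>
    rw [prod_range_succ, ih, prod_range_succ, Nat.succAbove, if_neg (by omega), mul_assoc]

theorem exists_apply_succ_le_and_le_apply {α : Type*} [LinearOrder α] {f : ℕ → α} {c : α} {n : ℕ}
    (h₀ : c ≤ f 0) (hn : f (n + 1) ≤ c) : ∃ k ≤ n, f (k + 1) ≤ c ∧ c ≤ f k := by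
  induction n with
  | zero => exact ⟨0, le_rfl, hn, h₀⟩
  | succ n ih =>
    rcases le_or_gt c (f (n + 1)) with h | h
    · exact ⟨n + 1, le_rfl, hn, h⟩
    · obtain ⟨k, hk, hk'⟩ := ih h.le
      exact ⟨k, hk.trans n.le_succ, hk'⟩

/-- `(a 0, …, a (n - 1))` majorizes `(b 0, …, b (n - 1))`. -/
def Majorizes (n : ℕ) (a b : ℕ → ℝ) : Prop :=
  (∀ j ≤ n, ∑ i ∈ range j, b i ≤ ∑ i ∈ range j, a i) ∧ ∑ i ∈ range n, a i = ∑ i ∈ range n, b i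

namespace Majorizes

variable {n : ℕ} {a b : ℕ → ℝ}

theorem head_le (h : Majorizes (n + 1) a b) : b 0 ≤ a 0 := by
  simpa using h.1 1 (by omega)

theorem last_le (h : Majorizes (n + 1) a b) (ha : AntitoneOn a (Set.Iio (n + 1)))
    (hb : AntitoneOn b (Set.Iio (n + 1))) : a n ≤ b 0 := by
  by_contra! hlt
  have hsum : ∑ i ∈ range (n + 1), b i < ∑ i ∈ range (n + 1), a i := by
    refine sum_lt_sum_of_nonempty ⟨0, by simp⟩ fun i hi => ?_
    have hi : i < n + 1 := mem_range.1 hi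
    calc b i ≤ b 0 := hb (by simp) (by simpa using hi) (Nat.zero_le i)
      _ < a n := hlt
      _ ≤ a i := ha (by simpa using hi) (by simp) (by omega)
  exact hsum.ne' h.2

end Majorizes

theorem AntitoneOn.update_comp_succAbove {n k : ℕ} {a : ℕ → ℝ} {c : ℝ}
    (ha : AntitoneOn a (Set.Iio (n + 2))) (hc₁ : a (k + 1) ≤ c) (hc₂ : c ≤ a k) :
    AntitoneOn (Function.update (a ∘ k.succAbove) k c) (Set.Iio (n + 1)) := by
  intro i hi j hj hij
  simp only [Set.mem_Iio] at hi hj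
  have h (i j : ℕ) (hij : i ≤ j) (hj : j < n + 2) : a j ≤ a i :=
    ha (by simp; omega) (by simpa) hij
  simp only [Function.update_apply, Function.comp_apply, Nat.succAbove]
  split_ifs <;> (try subst_vars) <;> first
    | omega
    | rfl
    | linarith [h i j (by omega) (by omega)]
    | linarith [h i (j + 1) (by omega) (by omega)]
    | linarith [h (i + 1) (j + 1) (by omega) (by omega)]

theorem sum_range_update_comp_succAbove_of_lt {k j : ℕ} (a : ℕ → ℝ) (c : ℝ) (hkj : k < j) :
    ∑ i ∈ range j, Function.update (a ∘ k.succAbove) k c i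
      = ∑ i ∈ range (j + 1), a i - a k - a (k + 1) + c := by
  rw [sum_update_of_mem (mem_range.2 hkj), sdiff_singleton_eq_erase,
    sum_range_succ_eq_add_sum_succAbove a hkj.le, ← add_sum_erase _ _ (mem_range.2 hkj),
    Nat.succAbove_self]
  simp only [Function.comp_apply]
  ring

theorem sum_range_update_comp_succAbove_of_le {k j : ℕ} (a : ℕ → ℝ) (c : ℝ) (hjk : j ≤ k) :
    ∑ i ∈ range j, Function.update (a ∘ k.succAbove) k c i = ∑ i ∈ range j, a i := by
  refine sum_congr rfl fun i hi => ?_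
  have hi : i < k := (mem_range.1 hi).trans_le hjk
  simp [Nat.succAbove, hi, hi.ne]

theorem Majorizes.update_comp_succAbove {n k : ℕ} {a b : ℕ → ℝ} (h : Majorizes (n + 2) a b)
    (hb : AntitoneOn b (Set.Iio (n + 2))) (hk : k ≤ n) :
    Majorizes (n + 1) (Function.update (a ∘ k.succAbove) k (a k + a (k + 1) - b 0))
      (fun i => b (i + 1)) := by
  have hb' (j : ℕ) : ∑ i ∈ range j, b (i + 1) = ∑ i ∈ range (j + 1), b i - b 0 := by
    rw [sum_range_succ']; ring
  refine ⟨fun j hj => ?_, ?_⟩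
  · rw [hb']
    rcases le_or_gt j k with hjk | hkj
    · rw [sum_range_update_comp_succAbove_of_le _ _ hjk, sum_range_succ]
      linarith [h.1 j (by omega), hb (by simp) (by simp; omega) (Nat.zero_le j)]
    · rw [sum_range_update_comp_succAbove_of_lt _ _ hkj]
      linarith [h.1 (j + 1) (by omega)]
  · rw [hb', sum_range_update_comp_succAbove_of_lt _ _ (by omega), h.2]
    ring

theorem exists_perm_eq_comp_of_map_univ_eq {ι α : Type*} [Fintype ι] [DecidableEq α]
    {f g : ι → α} (h : univ.val.map f = univ.val.map g) : ∃ σ : Equiv.Perm ι, f = g ∘ σ := by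
  have hcard (a : α) : Fintype.card {i // f i = a} = Fintype.card {i // g i = a} := by
    have := congrArg (Multiset.count a) h
    simp only [Multiset.count_map] at this
    simpa only [Fintype.card_subtype, Finset.card, filter_val, eq_comm] using this
  exact ⟨Equiv.ofFiberEquiv fun a => Fintype.equivOfCardEq (hcard a),
    funext fun i => (Equiv.ofFiberEquiv_map _ i).symm⟩

section

variable {𝕜 : Type*} [RCLike 𝕜] {m n : Type*} [Fintype m] [Fintype n] [DecidableEq m]
  [DecidableEq n]

theorem Matrix.IsHermitian.exists_perm_eigenvalues_eq {A : Matrix n n 𝕜} (hA : A.IsHermitian)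
    {d : n → ℝ} (h : A.charpoly = ∏ i, (X - C (d i : 𝕜))) :
    ∃ σ : Equiv.Perm n, ∀ i, hA.eigenvalues i = d (σ i) := by
  have hroots : (∏ i, (X - C (d i : 𝕜))).roots = univ.val.map (RCLike.ofReal ∘ d) := by
    rw [roots_prod _ _ (prod_ne_zero_iff.2 fun i _ => X_sub_C_ne_zero _)]
    simp
  rw [← h, hA.roots_charpoly_eq_eigenvalues, ← Multiset.map_map, ← Multiset.map_map] at hroots
  obtain ⟨σ, hσ⟩ := exists_perm_eq_comp_of_map_univ_eq
    (Multiset.map_injective RCLike.ofReal_injective hroots)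
  exact ⟨σ, congrFun hσ⟩

theorem Matrix.IsHermitian.exists_unitary_eq_mul_mul_star_of_charpoly_eq {A B : Matrix n n 𝕜}
    (hA : A.IsHermitian) (hB : B.IsHermitian) (h : A.charpoly = B.charpoly) :
    ∃ U ∈ unitaryGroup n 𝕜, B = U * A * star U := by
  have hA' := hA.spectral_theorem
  have hB' := hB.spectral_theorem
  rw [(hA.eigenvalues_eq_eigenvalues_iff hB).2 h] at hA'
  generalize hA.eigenvectorUnitary = U at hA'
  generalize hB.eigenvectorUnitary = V at hB'
  refine ⟨_, (V * star U).2, ?_⟩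
  have hU : star (U : Matrix n n 𝕜) * U = 1 := Unitary.coe_star_mul_self U
  rw [hB', hA']
  simp [mul_assoc, ← mul_assoc (star (U : Matrix n n 𝕜)) U, hU]

theorem Matrix.IsHermitian.exists_charpoly_eq_toBlocks₁₁_eq {A : Matrix (m ⊕ n) (m ⊕ n) 𝕜}
    (hA : A.IsHermitian) {B : Matrix m m 𝕜} (hB : B.IsHermitian)
    (h : A.toBlocks₁₁.charpoly = B.charpoly) :
    ∃ A' : Matrix (m ⊕ n) (m ⊕ n) 𝕜, A'.IsHermitian ∧ A'.charpoly = A.charpoly ∧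
      A'.toBlocks₁₁ = B ∧ A'.toBlocks₂₂ = A.toBlocks₂₂ := by
  have hA₁₁ : A.toBlocks₁₁.IsHermitian := hA.submatrix Sum.inl
  obtain ⟨U, hU, rfl⟩ := hA₁₁.exists_unitary_eq_mul_mul_star_of_charpoly_eq hB h
  have hUU : Uᴴ * U = 1 := mem_unitaryGroup_iff'.1 hU
  set W : Matrix (m ⊕ n) (m ⊕ n) 𝕜 := Matrix.fromBlocks U 0 0 1
  have hWW : star W * W = 1 := by
    simp [W, star_eq_conjTranspose, fromBlocks_conjTranspose, fromBlocks_multiply,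
      ← fromBlocks_one, hUU]
  refine ⟨W * A * star W, isHermitian_mul_mul_conjTranspose _ hA, ?_, ?_, ?_⟩
  · rw [charpoly_mul_comm, ← mul_assoc, hWW, one_mul]
  all_goals
    rw [← fromBlocks_toBlocks A]
    simp [W, star_eq_conjTranspose, fromBlocks_conjTranspose, fromBlocks_multiply]

theorem charpoly_fin_two_eq_of_sq_eq {a b c x : ℝ} (hx : x ^ 2 = (a - c) * (c - b)) :
    (!![(c : 𝕜), x; x, a + b - c]).charpoly = (X - C (a : 𝕜)) * (X - C (b : 𝕜)) := by
  have hdet : (c * (a + b - c) - x * x : 𝕜) = a * b := by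
    exact_mod_cast (show c * (a + b - c) - x * x = a * b by linear_combination -hx)
  rw [charpoly_fin_two, trace_fin_two_of, det_fin_two_of, hdet]
  simp only [map_add, map_mul, map_sub]
  ring

theorem exists_isHermitian_charpoly_cons {k : ℕ} {a b c : ℝ} (hb : b ≤ c) (ha : c ≤ a)
    (r : Fin k → ℝ) {B : Matrix (Fin (k + 1)) (Fin (k + 1)) 𝕜} (hB : B.IsHermitian)
    (hBp : B.charpoly = (X - C ((a + b - c : ℝ) : 𝕜)) * ∏ i, (X - C (r i : 𝕜))) :
    ∃ A : Matrix (Fin (k + 2)) (Fin (k + 2)) 𝕜, A.IsHermitian ∧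
      A.charpoly = (X - C (a : 𝕜)) * (X - C (b : 𝕜)) * ∏ i, (X - C (r i : 𝕜)) ∧
      A 0 0 = c ∧ ∀ i, A i.succ i.succ = B i i := by
  set x := √((a - c) * (c - b))
  have hx : x ^ 2 = (a - c) * (c - b) := Real.sq_sqrt (by nlinarith)
  -- the pivot `inr ()` and the coordinate `inl 0` are sent to the `2 × 2` block
  let f : Fin (k + 1) ⊕ Unit ≃ Fin 2 ⊕ Fin k :=
    { toFun := Sum.elim (Fin.cases (.inl 1) .inr) fun _ => .inl 0
      invFun := Sum.elim ![.inr (), .inl 0] fun i => .inl i.succ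
      left_inv := by
        rintro (i | _)
        · cases i using Fin.cases <;> rfl
        · rfl
      right_inv := by
        rintro (i | i)
        · fin_cases i <;> rfl
        · rfl }
  let A₀ := reindex f.symm f.symm
    (fromBlocks !![(c : 𝕜), x; x, a + b - c] 0 0 (diagonal fun i => (r i : 𝕜)))
  have hA₀ : A₀.IsHermitian := by
    refine IsHermitian.submatrix (IsHermitian.fromBlocks ?_ (by simp) ?_) f
    · ext i j; fin_cases i <;> fin_cases j <;> simp
    · exact isHermitian_diagonal_of_self_adjoint _ (funext fun i => by simp)
  have hA₀₁₁ : A₀.toBlocks₁₁ = diagonal (Fin.cons ((a + b - c : ℝ) : 𝕜) fun i => (r i : 𝕜)) := by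
    ext i j
    cases i using Fin.cases <;> cases j using Fin.cases <;>
      simp [A₀, f, toBlocks₁₁, diagonal_apply, (Fin.succ_ne_zero _).symm]
  obtain ⟨A₁, hA₁, hA₁p, hA₁₁, hA₁₂₂⟩ := hA₀.exists_charpoly_eq_toBlocks₁₁_eq hB
    (by rw [hA₀₁₁, charpoly_diagonal, Fin.prod_univ_succ, hBp]; simp)
  let e : Fin (k + 2) ≃ Fin (k + 1) ⊕ Unit :=
    (finSuccEquiv (k + 1)).trans (Equiv.optionEquivSumPUnit _)
  refine ⟨reindex e.symm e.symm A₁, hA₁.submatrix e, ?_, ?_, fun i => ?_⟩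
  · rw [charpoly_reindex, hA₁p, charpoly_reindex, charpoly_fromBlocks_zero₁₂,
      charpoly_fin_two_eq_of_sq_eq hx, charpoly_diagonal]
  · simpa [e, toBlocks₂₂, A₀, f] using congrFun (congrFun hA₁₂₂ ()) ()
  · simpa [e, toBlocks₁₁] using congrFun (congrFun hA₁₁ i) i

theorem exists_isHermitian_charpoly_diag_of_majorizes (N : ℕ) {a b : ℕ → ℝ}
    (ha : AntitoneOn a (Set.Iio N)) (hb : AntitoneOn b (Set.Iio N)) (h : Majorizes N a b) :
    ∃ A : Matrix (Fin N) (Fin N) 𝕜, A.IsHermitian ∧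
      A.charpoly = ∏ i ∈ range N, (X - C (a i : 𝕜)) ∧ ∀ i : Fin N, A i i = b i := by
  induction N generalizing a b with
  | zero => exact ⟨0, isHermitian_zero, by simp, finZeroElim⟩
  | succ N ih =>
  rcases N with _ | n
  · have hab : a 0 = b 0 := by simpa using h.2
    refine ⟨diagonal fun _ => (a 0 : 𝕜),
      isHermitian_diagonal_of_self_adjoint _ (funext fun i => by simp),
      by simp [charpoly_diagonal], fun i => ?_⟩
    simp [Fin.fin_one_eq_zero i, hab]
  obtain ⟨k, hk, hk₁, hk₂⟩ := exists_apply_succ_le_and_le_apply h.head_le (h.last_le ha hb)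
  obtain ⟨B, hB, hBp, hBd⟩ := ih (ha.update_comp_succAbove (by linarith) (by linarith))
    (fun i hi j hj hij => hb (by simp_all) (by simp_all) (by omega))
    (h.update_comp_succAbove hb hk)
  have hr := Fin.prod_univ_eq_prod_range (fun i => X - C (a (k.succAbove (k.succAbove i)) : 𝕜))
  obtain ⟨A, hA, hAp, hA₀, hAs⟩ := exists_isHermitian_charpoly_cons (𝕜 := 𝕜) hk₁ hk₂
    (fun i : Fin n => a (k.succAbove (k.succAbove i))) hB (by
      rw [hBp, prod_range_succ_eq_mul_prod_succAbove _ hk, hr]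
      simp [Nat.succAbove_ne])
  refine ⟨A, hA, ?_, fun i => ?_⟩
  · rw [hAp, prod_range_succ_eq_mul_prod_succAbove _ (by omega : k ≤ n + 1),
      prod_range_succ_eq_mul_prod_succAbove _ hk, Nat.succAbove_self, mul_assoc, hr]
  · cases i using Fin.cases with
    | zero => exact hA₀
    | succ i => exact (hAs i).trans (hBd i)

end

theorem sum_range_extend_val {N k : ℕ} (f : Fin N → ℝ) (hk : k ≤ N) :
    ∑ i ∈ range k, Function.extend Fin.val f 0 i
      = ∑ i ∈ univ.filter (fun i : Fin N => (i : ℕ) < k), f i := by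
  rw [sum_filter]
  simp_rw [← Fin.val_injective.extend_apply f 0]
  rw [Fin.sum_univ_eq_sum_range (fun i => if i < k then Function.extend Fin.val f 0 i else 0),
    ← sum_range_add_sum_Ico _ hk, sum_congr rfl fun i hi => if_pos (mem_range.1 hi),
    sum_congr rfl fun i hi => if_neg (mem_Ico.1 hi).1.not_gt, sum_const_zero, add_zero]

theorem antitoneOn_extend_val {N : ℕ} {f : Fin N → ℝ} (hf : ∀ i j : Fin N, i ≤ j → f j ≤ f i) :
    AntitoneOn (Function.extend Fin.val f 0) (Set.Iio N) := by
  intro i hi j hj hij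
  change Function.extend Fin.val f 0 (⟨j, hj⟩ : Fin N) ≤
    Function.extend Fin.val f 0 (⟨i, hi⟩ : Fin N)
  rw [Fin.val_injective.extend_apply, Fin.val_injective.extend_apply]
  exact hf _ _ hij

theorem majorizes_extend_val {N : ℕ} {f g : Fin N → ℝ}
    (hle : ∀ k : ℕ, 1 ≤ k → k < N → ∑ i ∈ univ.filter (fun i : Fin N => (i : ℕ) < k), g i ≤
      ∑ i ∈ univ.filter (fun i : Fin N => (i : ℕ) < k), f i)
    (heq : ∑ i, f i = ∑ i, g i) :
    Majorizes N (Function.extend Fin.val f 0) (Function.extend Fin.val g 0) := by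
  have htot (f : Fin N → ℝ) : ∑ i ∈ range N, Function.extend Fin.val f 0 i = ∑ i, f i := by
    simp [← Fin.sum_univ_eq_sum_range, Fin.val_injective.extend_apply]
  refine ⟨fun k hk => ?_, by rw [htot, htot, heq]⟩
  rcases Nat.eq_zero_or_pos k with rfl | hk₀
  · simp
  rcases hk.eq_or_lt with rfl | hkN
  · rw [htot, htot, heq]
  · rw [sum_range_extend_val _ hk, sum_range_extend_val _ hk]
    exact hle k hk₀ hkN

/-- Horn: if a nonincreasing real sequence majorizes another
nonincreasing real sequence, then there is a Hermitian matrix with the first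
as its spectrum (with multiplicity) and the second as its diagonal. -/
theorem horn_exists_hermitian {N : ℕ}
    (lam mu : Fin N → ℝ)
    (hlam_anti : ∀ i j : Fin N, i ≤ j → lam j ≤ lam i)
    (hmu_anti : ∀ i j : Fin N, i ≤ j → mu j ≤ mu i)
    (hmaj : (∀ k : ℕ, 1 ≤ k → k < N →
        ∑ i ∈ Finset.univ.filter (fun i : Fin N => (i : ℕ) < k), mu i ≤
        ∑ i ∈ Finset.univ.filter (fun i : Fin N => (i : ℕ) < k), lam i) ∧
      ∑ i, lam i = ∑ i, mu i) :
    ∃ G : Matrix (Fin N) (Fin N) ℂ, ∃ hG : G.IsHermitian,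
      (∃ σ : Equiv.Perm (Fin N), ∀ i, hG.eigenvalues i = lam (σ i)) ∧
      ∀ n : Fin N, G n n = (mu n : ℂ) := by
  obtain ⟨G, hG, hGp, hGd⟩ := exists_isHermitian_charpoly_diag_of_majorizes (𝕜 := ℂ) N
    (antitoneOn_extend_val hlam_anti) (antitoneOn_extend_val hmu_anti)
    (majorizes_extend_val hmaj.1 hmaj.2)
  rw [← Fin.prod_univ_eq_prod_range] at hGp
  simp only [Fin.val_injective.extend_apply] at hGp hGd
  exact ⟨G, hG, hG.exists_perm_eigenvalues_eq hGp, hGd⟩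
end

section
/- Let {λ_n}_{n=1}^N and {μ_n}_{n=1}^N be nonnegative nonincreasing real sequences with {λ_n}_{n=1}^N ≽ {μ_n}_{n=1}^N. Then there exists a corresponding sequence of inner eigensteps {{λ_{n;m}}_{m=1}^n}_{n=1}^N. -/
/-- `{a_m}_{m=1}^N` majorizes `{b_m}_{m=1}^N` (sequences indexed `1,…,N`). -/
def Maj (N : ℕ) (a b : ℕ → ℝ) : Prop :=
  (∀ k, 1 ≤ k → k < N →
    ∑ m ∈ Finset.Icc 1 k, b m ≤ ∑ m ∈ Finset.Icc 1 k, a m) ∧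
  ∑ m ∈ Finset.Icc 1 N, a m = ∑ m ∈ Finset.Icc 1 N, b m

/-- `L` is a sequence of inner eigensteps for `lam`, `mu`:
(i) the `N`th row is `lam`; (ii) consecutive rows interlace;
(iii) the `n`th row sums to `μ₁ + ⋯ + μₙ`. -/
def IsInnerEigensteps (N : ℕ) (lam mu : ℕ → ℝ) (L : ℕ → ℕ → ℝ) : Prop :=
  (∀ m, 1 ≤ m → m ≤ N → L N m = lam m) ∧
  (∀ n, 2 ≤ n → n ≤ N → ∀ m, 1 ≤ m → m ≤ n - 1 →
    L n (m + 1) ≤ L (n - 1) m ∧ L (n - 1) m ≤ L n m) ∧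
  (∀ n, 1 ≤ n → n ≤ N →
    ∑ m ∈ Finset.Icc 1 n, L n m = ∑ m ∈ Finset.Icc 1 n, mu m)

/-- if `{λ_n} ≽ {μ_n}` (both nonnegative and nonincreasing),
then a corresponding sequence of inner eigensteps exists. -/
theorem inner_eigensteps_exist (N : ℕ) (lam mu : ℕ → ℝ)
    (hlam_nonneg : ∀ m, 1 ≤ m → m ≤ N → 0 ≤ lam m)
    (hlam_anti : ∀ m, 1 ≤ m → m + 1 ≤ N → lam (m + 1) ≤ lam m)
    (hmu_nonneg : ∀ m, 1 ≤ m → m ≤ N → 0 ≤ mu m)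
    (hmu_anti : ∀ m, 1 ≤ m → m + 1 ≤ N → mu (m + 1) ≤ mu m)
    (hmaj : Maj N lam mu) :
    ∃ L : ℕ → ℕ → ℝ, IsInnerEigensteps N lam mu L := by
  classical
  set Λ : ℕ → ℝ := fun k => ∑ m ∈ Finset.Icc 1 k, lam m with hΛdef
  set M : ℕ → ℝ := fun k => ∑ m ∈ Finset.Icc 1 k, mu m with hMdef
  have hΛ0 : Λ 0 = 0 := by simp [hΛdef]
  have hM0 : M 0 = 0 := by simp [hMdef]
  have hΛstep : ∀ k, Λ (k + 1) = Λ k + lam (k + 1) := by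
    intro k
    simp only [hΛdef]
    rw [Finset.sum_Icc_succ_top (by omega)]
  have hMstep : ∀ k, M (k + 1) = M k + mu (k + 1) := by
    intro k
    simp only [hMdef]
    rw [Finset.sum_Icc_succ_top (by omega)]
  have hlam_mono : ∀ a, 1 ≤ a → ∀ b, a ≤ b → b ≤ N → lam b ≤ lam a := by
    intro a ha b hab
    induction b, hab using Nat.le_induction with
    | base => intro _; exact le_rfl
    | succ b hb ih =>
      intro hbN
      exact le_trans (hlam_anti b (le_trans ha hb) hbN) (ih (by omega))
  have hmu_mono : ∀ a, 1 ≤ a → ∀ b, a ≤ b → b ≤ N → mu b ≤ mu a := by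
    intro a ha b hab
    induction b, hab using Nat.le_induction with
    | base => intro _; exact le_rfl
    | succ b hb ih =>
      intro hbN
      exact le_trans (hmu_anti b (le_trans ha hb) hbN) (ih (by omega))
  -- majorization : M k ≤ Λ k for all k ≤ N
  have hΛN : Λ N = M N := hmaj.2
  have hMΛ : ∀ k, k ≤ N → M k ≤ Λ k := by
    intro k hk
    rcases Nat.eq_zero_or_pos k with hk0 | hk1
    · subst hk0; rw [hΛ0, hM0]
    rcases lt_or_eq_of_le hk with hlt | heq
    · exact hmaj.1 k hk1 hlt
    · subst heq; exact le_of_eq hΛN.symm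
  -- tail sums of mu are dominated by head sums
  have hMdiff : ∀ n, 1 ≤ n → ∀ i, n + i ≤ N → M (n + i) - M n ≤ M i := by
    intro n hn i
    induction i with
    | zero => intro _; simp [hM0]
    | succ i ih =>
      intro hNi
      have h1 : M (n + (i + 1)) = M (n + i) + mu (n + i + 1) := by
        rw [show n + (i + 1) = (n + i) + 1 by ring, hMstep]
      have h2 : M (i + 1) = M i + mu (i + 1) := hMstep i
      have h3 : mu (n + i + 1) ≤ mu (i + 1) := hmu_mono (i + 1) (by omega) (n + i + 1) (by omega) (by omega)
      have h4 := ih (by omega)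
      rw [h1, h2]; linarith
  -- the key construction
  set P : ℕ → ℕ → ℝ := fun n k =>
    (Finset.range (N - n + 1)).inf' Finset.nonempty_range_add_one
      (fun i => Λ (k + i) - M (n + i) + M n) with hPdef
  have hPle : ∀ n k i, i ≤ N - n → P n k ≤ Λ (k + i) - M (n + i) + M n := by
    intro n k i hi
    rw [hPdef]
    exact Finset.inf'_le _ (Finset.mem_range.mpr (by omega))
  have hPmin : ∀ n k, ∃ i, i ≤ N - n ∧ P n k = Λ (k + i) - M (n + i) + M n := by
    intro n k
    obtain ⟨i, hi, h⟩ := Finset.exists_mem_eq_inf' (s := Finset.range (N - n + 1))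
      Finset.nonempty_range_add_one (fun i => Λ (k + i) - M (n + i) + M n)
    exact ⟨i, by simpa using Nat.lt_succ_iff.mp (Finset.mem_range.mp hi), h⟩
  -- row N is Λ
  have hPN : ∀ k, P N k = Λ k := by
    intro k
    obtain ⟨i, hi, h⟩ := hPmin N k
    have : i = 0 := by omega
    subst this
    simpa using h
  -- P n 0 = 0
  have hP0 : ∀ n, 1 ≤ n → n ≤ N → P n 0 = 0 := by
    intro n hn hnN
    have h1 : P n 0 ≤ 0 := by
      have := hPle n 0 0 (by omega)
      simpa [hΛ0] using this
    have h2 : (0:ℝ) ≤ P n 0 := by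
      rw [hPdef]
      apply Finset.le_inf'
      intro i hi
      have hi' : i ≤ N - n := Nat.lt_succ_iff.mp (Finset.mem_range.mp hi)
      have h3 : M (n + i) - M n ≤ M i := hMdiff n hn i (by omega)
      have h4 : M i ≤ Λ i := hMΛ i (by omega)
      simp only [Nat.zero_add]
      linarith
    linarith
  -- P n n = M n
  have hPnn : ∀ n, 1 ≤ n → n ≤ N → P n n = M n := by
    intro n hn hnN
    have h1 : P n n ≤ M n := by
      have := hPle n n (N - n) (le_rfl)
      rw [show n + (N - n) = N by omega] at this
      rw [hΛN] at this
      linarith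
    have h2 : M n ≤ P n n := by
      rw [hPdef]
      apply Finset.le_inf'
      intro i hi
      have hi' : i ≤ N - n := Nat.lt_succ_iff.mp (Finset.mem_range.mp hi)
      have h4 : M (n + i) ≤ Λ (n + i) := hMΛ (n + i) (by omega)
      linarith
    linarith
  -- interlacing upper inequality
  have hUp : ∀ n m, 1 ≤ n → n + 1 ≤ N → m + 1 ≤ n →
      P n (m + 1) + P (n + 1) m ≤ P (n + 1) (m + 1) + P n m := by
    intro n m hn hnN hm
    obtain ⟨j, hj, hjE⟩ := hPmin (n + 1) (m + 1)
    obtain ⟨i, hi, hiE⟩ := hPmin n m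
    rcases le_total j i with hji | hij
    · -- use indices i (for P n (m+1)) and j (for P (n+1) m)
      have hA : P n (m + 1) ≤ Λ (m + 1 + i) - M (n + i) + M n := hPle n (m + 1) i hi
      have hB : P (n + 1) m ≤ Λ (m + j) - M (n + 1 + j) + M (n + 1) := hPle (n + 1) m j hj
      have hΛ1 : Λ (m + 1 + i) = Λ (m + i) + lam (m + i + 1) := by
        rw [show m + 1 + i = (m + i) + 1 by ring, hΛstep]
      have hΛ2 : Λ (m + 1 + j) = Λ (m + j) + lam (m + j + 1) := by
        rw [show m + 1 + j = (m + j) + 1 by ring, hΛstep]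
      have hlam : lam (m + i + 1) ≤ lam (m + j + 1) :=
        hlam_mono (m + j + 1) (by omega) (m + i + 1) (by omega) (by omega)
      rw [hjE, hiE, hΛ2]
      rw [hΛ1] at hA
      linarith
    · -- i ≤ j : use indices j (for P n (m+1)) and i (for P (n+1) m)
      have hA : P n (m + 1) ≤ Λ (m + 1 + j) - M (n + j) + M n := hPle n (m + 1) j (by omega)
      have hB : P (n + 1) m ≤ Λ (m + i) - M (n + 1 + i) + M (n + 1) := hPle (n + 1) m i (by omega)
      have hM1 : M (n + 1 + j) = M (n + j) + mu (n + j + 1) := by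
        rw [show n + 1 + j = (n + j) + 1 by ring, hMstep]
      have hM2 : M (n + 1 + i) = M (n + i) + mu (n + i + 1) := by
        rw [show n + 1 + i = (n + i) + 1 by ring, hMstep]
      have hmu : mu (n + j + 1) ≤ mu (n + i + 1) :=
        hmu_mono (n + i + 1) (by omega) (n + j + 1) (by omega) (by omega)
      rw [hjE, hiE, hM1]
      rw [hM2] at hB
      linarith
  -- interlacing lower inequality
  have hLow : ∀ n m, 1 ≤ n → n + 1 ≤ N → m + 1 ≤ n →
      P (n + 1) (m + 2) + P n m ≤ P n (m + 1) + P (n + 1) (m + 1) := by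
    intro n m hn hnN hm
    obtain ⟨j, hj, hjE⟩ := hPmin n (m + 1)
    obtain ⟨i, hi, hiE⟩ := hPmin (n + 1) (m + 1)
    rcases Nat.eq_zero_or_pos j with hj0 | hj1
    · subst hj0
      -- use a = i for P (n+1) (m+2), b = 0 for P n m
      have hA : P (n + 1) (m + 2) ≤ Λ (m + 2 + i) - M (n + 1 + i) + M (n + 1) :=
        hPle (n + 1) (m + 2) i hi
      have hB : P n m ≤ Λ (m + 0) - M (n + 0) + M n := hPle n m 0 (by omega)
      have hΛ1 : Λ (m + 2 + i) = Λ (m + 1 + i) + lam (m + 1 + i + 1) := by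
        rw [show m + 2 + i = (m + 1 + i) + 1 by ring, hΛstep]
      have hΛ2 : Λ (m + 1) = Λ m + lam (m + 1) := hΛstep m
      -- need lam (m+1+i+1) ≤ lam (m+1) and Λ concavity chain
      have hlam : lam (m + 1 + i + 1) ≤ lam (m + 1) :=
        hlam_mono (m + 1) (by omega) (m + 1 + i + 1) (by omega) (by omega)
      -- Λ(m+2+i) + Λ m ≤ Λ(m+1) + Λ(m+1+i)
      have hchain : Λ (m + 2 + i) + Λ m ≤ Λ (m + 1) + Λ (m + 1 + i) := by
        rw [hΛ1, hΛ2]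
        -- reduces to lam (m+1+i+1) + Λ m ≤ lam (m+1) + Λ m? no:
        -- Λ(m+1+i) + lam(m+1+i+1) + Λ m ≤ Λ m + lam(m+1) + Λ(m+1+i)
        linarith
      rw [hjE, hiE]
      simp only [Nat.add_zero] at hjE hB ⊢
      rw [hjE] at *
      linarith [hA, hB, hchain]
    · -- j ≥ 1 : exact matching, a = j - 1, b = i + 1
      obtain ⟨j', rfl⟩ : ∃ j', j = j' + 1 := ⟨j - 1, by omega⟩
      have hA : P (n + 1) (m + 2) ≤ Λ (m + 2 + j') - M (n + 1 + j') + M (n + 1) :=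
        hPle (n + 1) (m + 2) j' (by omega)
      have hB : P n m ≤ Λ (m + (i + 1)) - M (n + (i + 1)) + M n :=
        hPle n m (i + 1) (by omega)
      rw [hjE, hiE]
      have e1 : m + 2 + j' = m + 1 + (j' + 1) := by ring
      have e2 : n + 1 + j' = n + (j' + 1) := by ring
      have e3 : m + (i + 1) = m + 1 + i := by ring
      have e4 : n + (i + 1) = n + 1 + i := by ring
      rw [e1, e2] at hA
      rw [e3, e4] at hB
      linarith
  -- telescoping sum lemma
  have htel : ∀ (f : ℕ → ℝ) n, ∑ m ∈ Finset.Icc 1 n, (f m - f (m - 1)) = f n - f 0 := by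
    intro f n
    induction n with
    | zero => simp
    | succ n ih =>
      rw [Finset.sum_Icc_succ_top (by omega), ih]
      simp
  -- assemble
  refine ⟨fun n m => P n m - P n (m - 1), ?_, ?_, ?_⟩
  · intro m hm hmN
    obtain ⟨m', rfl⟩ : ∃ m', m = m' + 1 := ⟨m - 1, by omega⟩
    simp only [Nat.add_sub_cancel]
    rw [hPN, hPN, hΛstep]
    ring
  · intro n hn2 hnN m hm1 hmn
    obtain ⟨n', rfl⟩ : ∃ n', n = n' + 1 := ⟨n - 1, by omega⟩
    obtain ⟨m', rfl⟩ : ∃ m', m = m' + 1 := ⟨m - 1, by omega⟩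
    simp only [Nat.add_sub_cancel]
    have h1 := hUp n' m' (by omega) (by omega) (by omega)
    have h2 := hLow n' m' (by omega) (by omega) (by omega)
    refine ⟨?_, by linarith⟩
    show P (n' + 1) (m' + 1 + 1) - P (n' + 1) (m' + 1 + 1 - 1) ≤ P n' (m' + 1) - P n' (m' + 1 - 1)
    have e : m' + 1 + 1 - 1 = m' + 1 := rfl
    rw [e]
    simp only [Nat.add_sub_cancel, show m' + 1 + 1 = m' + 2 from rfl]
    linarith
  · intro n hn hnN
    rw [htel (P n) n, hPnn n hn hnN, hP0 n hn hnN]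
    simp [hMdef]
end

section
/- Let {λ_n}_{n=1}^N and {μ_n}_{n=1}^N be nonnegative nonincreasing real sequences. If there exists a corresponding sequence of inner eigensteps {{λ_{n;m}}_{m=1}^n}_{n=1}^N, then {λ_n}_{n=1}^N majorizes {μ_n}_{n=1}^N. -/
/-- if a sequence of inner eigensteps for `{λ_n}` and `{μ_n}`
exists, then `{λ_n}` majorizes `{μ_n}`. -/
theorem inner_eigensteps_imp_majorization (N : ℕ) (lam mu : ℕ → ℝ)
    (hlam_nonneg : ∀ m, 1 ≤ m → m ≤ N → 0 ≤ lam m)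
    (hlam_anti : ∀ m, 1 ≤ m → m + 1 ≤ N → lam (m + 1) ≤ lam m)
    (hmu_nonneg : ∀ m, 1 ≤ m → m ≤ N → 0 ≤ mu m)
    (hmu_anti : ∀ m, 1 ≤ m → m + 1 ≤ N → mu (m + 1) ≤ mu m)
    (L : ℕ → ℕ → ℝ) (hL : IsInnerEigensteps N lam mu L) :
    Maj N lam mu := by
  obtain ⟨h1, h2, h3⟩ := hL
  constructor
  · intro k hk1 hkN
    have key : ∀ j, k + j ≤ N →
        ∑ m ∈ Finset.Icc 1 k, L k m ≤ ∑ m ∈ Finset.Icc 1 k, L (k + j) m := by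
      intro j
      induction j with
      | zero => intro _; simp
      | succ j ih =>
        intro hj
        refine (ih (by omega)).trans ?_
        apply Finset.sum_le_sum
        intro m hm
        rw [Finset.mem_Icc] at hm
        have h := (h2 (k + j + 1) (by omega) (by omega) m hm.1 (by omega)).2
        have he : k + j + 1 - 1 = k + j := by omega
        rw [he] at h
        exact_mod_cast h
    have h4 : ∑ m ∈ Finset.Icc 1 k, L k m ≤ ∑ m ∈ Finset.Icc 1 k, L N m := by
      have := key (N - k) (by omega)
      rwa [show k + (N - k) = N by omega] at this
    calc ∑ m ∈ Finset.Icc 1 k, mu m = ∑ m ∈ Finset.Icc 1 k, L k m :=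
          (h3 k hk1 (by omega)).symm
      _ ≤ ∑ m ∈ Finset.Icc 1 k, L N m := h4
      _ = ∑ m ∈ Finset.Icc 1 k, lam m := by
          refine Finset.sum_congr rfl fun m hm => ?_
          rw [Finset.mem_Icc] at hm
          exact h1 m hm.1 (by omega)
  · rcases Nat.eq_zero_or_pos N with hN | hN
    · simp [hN]
    · calc ∑ m ∈ Finset.Icc 1 N, lam m = ∑ m ∈ Finset.Icc 1 N, L N m := by
            refine Finset.sum_congr rfl fun m hm => ?_
            rw [Finset.mem_Icc] at hm
            exact (h1 m hm.1 hm.2).symm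
        _ = ∑ m ∈ Finset.Icc 1 N, mu m := h3 N hN le_rfl
end

section
/- Let n ≥ 2, let {β_m}_{m=1}^n be a nonincreasing real sequence and {μ_m}_{m=1}^n a nonincreasing real sequence such that {β_m}_{m=1}^n majorizes {μ_m}_{m=1}^n, and suppose k ∈ {1,…,n−1} satisfies β_{k+1} ≤ μ_n ≤ β_k. Define {α_m}_{m=1}^{n−1} by the Top Kill step: α_m = β_m for 1 ≤ m ≤ k−1, α_k = β_k + β_{k+1} − μ_n, and α_m = β_{m+1} for k+1 ≤ m ≤ n−1. Then {α_m}_{m=1}^{n−1} majorizes {μ_m}_{m=1}^{n−1}. -/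
lemma anti_helper (f : ℕ → ℝ) (n : ℕ)
    (hf : ∀ m, 1 ≤ m → m + 1 ≤ n → f (m + 1) ≤ f m) :
    ∀ a b, 1 ≤ a → a ≤ b → b ≤ n → f b ≤ f a := by
  intro a b ha hab hbn
  induction b with
  | zero => omega
  | succ b ih =>
    rcases Nat.eq_or_lt_of_le hab with h | h
    · rw [← h]
    · exact le_trans (hf b (by omega) (by omega)) (ih (by omega) (by omega))

/-- if `{β_m}_{m=1}^n ≽ {μ_m}_{m=1}^n`, then the Top Kill step
produces `{α_m}_{m=1}^{n-1}` with `{α_m}_{m=1}^{n-1} ≽ {μ_m}_{m=1}^{n-1}`. -/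
theorem topKill_majorizes (n : ℕ) (hn : 2 ≤ n) (β μ : ℕ → ℝ)
    (hβ_anti : ∀ m, 1 ≤ m → m + 1 ≤ n → β (m + 1) ≤ β m)
    (hμ_anti : ∀ m, 1 ≤ m → m + 1 ≤ n → μ (m + 1) ≤ μ m)
    (hmaj : Maj n β μ)
    (k : ℕ) (hk1 : 1 ≤ k) (hk2 : k ≤ n - 1)
    (hμ1 : β (k + 1) ≤ μ n) (hμ2 : μ n ≤ β k)
    (α : ℕ → ℝ)
    (hα : ∀ m, 1 ≤ m → m ≤ n - 1 →
      α m = if m < k then β m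
            else if m = k then β k + β (k + 1) - μ n
            else β (m + 1)) :
    Maj (n - 1) α μ := by
  obtain ⟨hmaj1, hmaj2⟩ := hmaj
  have hαβ_lt : ∀ j, j ≤ n - 1 → j < k →
      ∑ m ∈ Finset.Icc 1 j, α m = ∑ m ∈ Finset.Icc 1 j, β m := by
    intro j hj hjk
    apply Finset.sum_congr rfl
    intro m hm
    simp only [Finset.mem_Icc] at hm
    rw [hα m hm.1 (by omega)]
    simp [show m < k by omega]
  have key : ∀ j, k ≤ j → j ≤ n - 1 →
      ∑ m ∈ Finset.Icc 1 j, α m = ∑ m ∈ Finset.Icc 1 (j + 1), β m - μ n := by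
    intro j hkj hj
    induction j with
    | zero => omega
    | succ j ih =>
      rcases Nat.eq_or_lt_of_le hkj with h | h
      · subst h
        rw [Finset.sum_Icc_succ_top (by omega : 1 ≤ j + 1) α,
          hαβ_lt j (by omega) (by omega), hα (j + 1) (by omega) (by omega)]
        simp only [lt_irrefl, if_false, if_true, eq_self_iff_true]
        rw [Finset.sum_Icc_succ_top (show 1 ≤ j + 1 + 1 by omega) β,
          Finset.sum_Icc_succ_top (show 1 ≤ j + 1 by omega) β]
        ring
      · rw [Finset.sum_Icc_succ_top (by omega : 1 ≤ j + 1) α, ih (by omega) (by omega),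
          hα (j + 1) (by omega) (by omega)]
        simp only [show ¬ (j + 1 < k) by omega, if_false, show ¬ (j + 1 = k) by omega]
        rw [Finset.sum_Icc_succ_top (show 1 ≤ j + 1 + 1 by omega) β]
        ring
  constructor
  · intro j hj1 hj2
    by_cases hjk : j < k
    · rw [hαβ_lt j (by omega) hjk]
      exact hmaj1 j hj1 (by omega)
    · rw [key j (by omega) (by omega)]
      have h1 := hmaj1 (j + 1) (by omega) (by omega)
      rw [Finset.sum_Icc_succ_top (show 1 ≤ j + 1 by omega) μ] at h1
      have h2 : μ n ≤ μ (j + 1) := anti_helper μ n hμ_anti (j + 1) n (by omega) (by omega) le_rfl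
      linarith
  · have hn' : n - 1 + 1 = n := by omega
    rw [key (n - 1) hk2 le_rfl, hn', hmaj2, ← hn',
      Finset.sum_Icc_succ_top (show 1 ≤ n - 1 + 1 by omega) μ, hn']
    ring
end

section
/- Let n ≥ 2, let {β_m}_{m=1}^n be a nonincreasing real sequence and {μ_m}_{m=1}^n a nonincreasing real sequence such that {β_m}_{m=1}^n majorizes {μ_m}_{m=1}^n. Then: (a) there exists k ∈ {1,…,n−1} such that β_{k+1} ≤ μ_n ≤ β_k; and (b) if k and k′ are both indices in {1,…,n−1} satisfying β_{k+1} ≤ μ_n ≤ β_k and β_{k′+1} ≤ μ_n ≤ β_{k′}, then the Top Kill outputs computed with k and with k′ coincide: for every m = 1,…,n−1, the value (β_m if m ≤ k−1; β_k + β_{k+1} − μ_n if m = k; β_{m+1} if m ≥ k+1) equals the value (β_m if m ≤ k′−1; β_{k′} + β_{k′+1} − μ_n if m = k′; β_{m+1} if m ≥ k′+1). -/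
/-- A one-step antitone sequence is antitone on `[1, n]`. -/
lemma anti_of_step (n : ℕ) (f : ℕ → ℝ)
    (hf : ∀ m, 1 ≤ m → m + 1 ≤ n → f (m + 1) ≤ f m) :
    ∀ i j, 1 ≤ i → i ≤ j → j ≤ n → f j ≤ f i := by
  intro i j hi hij hj
  induction j with
  | zero => omega
  | succ j ih =>
    rcases eq_or_lt_of_le hij with h | h
    · subst h; exact le_refl _
    · exact le_trans (hf j (by omega) hj) (ih (by omega) (by omega))

/-- (a) a valid Top Kill pivot `k` exists, and (b) the Top Kill
output does not depend on the choice of valid pivot. -/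
theorem topKill_wellDefined (n : ℕ) (hn : 2 ≤ n) (β μ : ℕ → ℝ)
    (hβ_anti : ∀ m, 1 ≤ m → m + 1 ≤ n → β (m + 1) ≤ β m)
    (hμ_anti : ∀ m, 1 ≤ m → m + 1 ≤ n → μ (m + 1) ≤ μ m)
    (hmaj : Maj n β μ) :
    (∃ k, 1 ≤ k ∧ k ≤ n - 1 ∧ β (k + 1) ≤ μ n ∧ μ n ≤ β k) ∧
    (∀ k k', 1 ≤ k → k ≤ n - 1 → β (k + 1) ≤ μ n → μ n ≤ β k →
      1 ≤ k' → k' ≤ n - 1 → β (k' + 1) ≤ μ n → μ n ≤ β k' →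
      ∀ m, 1 ≤ m → m ≤ n - 1 →
        (if m < k then β m
         else if m = k then β k + β (k + 1) - μ n
         else β (m + 1)) =
        (if m < k' then β m
         else if m = k' then β k' + β (k' + 1) - μ n
         else β (m + 1))) := by
  classical
  have hβmono := anti_of_step n β hβ_anti
  have hμmono := anti_of_step n μ hμ_anti
  -- μ n ≤ β 1
  have hμ1β1 : μ 1 ≤ β 1 := by
    have := hmaj.1 1 le_rfl (by omega)
    simpa using this
  have hμnβ1 : μ n ≤ β 1 := le_trans (hμmono 1 n le_rfl (by omega) le_rfl) hμ1β1
  -- β n ≤ μ n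
  obtain ⟨p, rfl⟩ : ∃ p, n = p + 1 := ⟨n - 1, by omega⟩
  have hp : 1 ≤ p := by omega
  have hβnμn : β (p + 1) ≤ μ (p + 1) := by
    have h1 : ∑ m ∈ Finset.Icc 1 p, μ m ≤ ∑ m ∈ Finset.Icc 1 p, β m :=
      hmaj.1 p hp (by omega)
    have h2 := hmaj.2
    rw [Finset.sum_Icc_succ_top (by omega), Finset.sum_Icc_succ_top (by omega)] at h2
    linarith
  -- existence: take the largest valid pivot
  set S := (Finset.Icc 1 p).filter (fun k => μ (p + 1) ≤ β k) with hS
  have h1S : 1 ∈ S := by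
    simp only [hS, Finset.mem_filter, Finset.mem_Icc]
    exact ⟨⟨le_rfl, hp⟩, hμnβ1⟩
  have hSne : S.Nonempty := ⟨1, h1S⟩
  set k₀ := S.max' hSne with hk₀
  have hk₀S : k₀ ∈ S := S.max'_mem hSne
  obtain ⟨hk₀Icc, hk₀β⟩ := Finset.mem_filter.mp hk₀S
  rw [Finset.mem_Icc] at hk₀Icc
  have hexist : β (k₀ + 1) ≤ μ (p + 1) := by
    rcases eq_or_lt_of_le hk₀Icc.2 with h | h
    · rw [h]; exact hβnμn
    · by_contra hc
      push_neg at hc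
      have : k₀ + 1 ∈ S := by
        simp only [hS, Finset.mem_filter, Finset.mem_Icc]
        exact ⟨⟨by omega, by omega⟩, le_of_lt hc⟩
      have := S.le_max' _ this
      omega
  constructor
  · exact ⟨k₀, hk₀Icc.1, by omega, hexist, hk₀β⟩
  -- uniqueness of output
  · have key : ∀ k k', 1 ≤ k → k ≤ p + 1 - 1 → β (k + 1) ≤ μ (p + 1) → μ (p + 1) ≤ β k →
      1 ≤ k' → k' ≤ p + 1 - 1 → β (k' + 1) ≤ μ (p + 1) → μ (p + 1) ≤ β k' →
      k ≤ k' →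
      ∀ m, 1 ≤ m → m ≤ p + 1 - 1 →
        (if m < k then β m
         else if m = k then β k + β (k + 1) - μ (p + 1)
         else β (m + 1)) =
        (if m < k' then β m
         else if m = k' then β k' + β (k' + 1) - μ (p + 1)
         else β (m + 1)) := by
      intro k k' hk1 hkp hkμ hμk hk'1 hk'p hk'μ hμk' hkk' m hm1 hmp
      rcases eq_or_lt_of_le hkk' with rfl | hlt
      · rfl
      -- k < k': β is constantly μ (p+1) on [k+1, k']
      have hconst : ∀ j, k + 1 ≤ j → j ≤ k' → β j = μ (p + 1) := by
        intro j hj1 hj2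
        have h1 : β j ≤ β (k + 1) := hβmono (k + 1) j (by omega) hj1 (by omega)
        have h2 : β k' ≤ β j := hβmono j k' (by omega) hj2 (by omega)
        linarith
      rcases lt_trichotomy m k with h | h | h
      · rw [if_pos h, if_pos (h.trans hlt)]
      · subst h
        rw [if_neg (lt_irrefl m), if_pos rfl, if_pos hlt]
        have := hconst (m + 1) le_rfl (by omega)
        linarith
      · rw [if_neg (by omega), if_neg (by omega)]
        rcases lt_trichotomy m k' with h' | h' | h'
        · rw [if_pos h']
          rw [hconst m (by omega) (by omega), hconst (m + 1) (by omega) (by omega)]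
        · subst h'
          rw [if_neg (lt_irrefl m), if_pos rfl]
          have := hconst m (by omega) le_rfl
          linarith
        · rw [if_neg (by omega), if_neg (by omega)]
    intro k k' hk1 hkp hkμ hμk hk'1 hk'p hk'μ hμk' m hm1 hmp
    rcases le_total k k' with h | h
    · exact key k k' hk1 hkp hkμ hμk hk'1 hk'p hk'μ hμk' h m hm1 hmp
    · exact (key k' k hk'1 hk'p hk'μ hμk' hk1 hkp hkμ hμk h m hm1 hmp).symm
end

section
/- Let n ≥ 2, let {β_m}_{m=1}^n and {μ_m}_{m=1}^n be nonincreasing real sequences with {β_m}_{m=1}^n ≽ {μ_m}_{m=1}^n, and let {α_m}_{m=1}^{n−1} be real numbers such that {α_m}_{m=1}^{n−1} ≽ {μ_m}_{m=1}^{n−1} and {α_m}_{m=1}^{n−1} interlaces on {β_m}_{m=1}^{n}. Then for every k = 1,…,n−1 one has A_k ≤ α_k ≤ B_k, where A_k := max{ β_{k+1}, Σ_{m=k}^{n} β_m − Σ_{m=k+1}^{n−1} α_m − μ_n } and B_k := min{ β_k, min_{l=1,…,k} ( Σ_{m=l}^{n−1} μ_m − Σ_{m=l+1}^{k} β_m −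 Σ_{m=k+1}^{n−1} α_m ) }, with the convention that sums over empty index sets are zero. -/
open Finset

section Intervals

variable {M : Type*} [AddCommMonoid M]

theorem Finset.sum_Icc_add_sum_Icc_succ (f : ℕ → M) {a b c : ℕ} (hab : a ≤ b + 1)
    (hbc : b ≤ c) : ∑ m ∈ Icc a b, f m + ∑ m ∈ Icc (b + 1) c, f m = ∑ m ∈ Icc a c, f m := by
  simpa only [Ico_add_one_right_eq_Icc] using sum_Ico_consecutive f hab (by omega : b + 1 ≤ c + 1)

theorem Finset.sum_Icc_succ_add_le_sum_Icc [PartialOrder M] [IsOrderedAddMonoid M]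
    {a b : ℕ → M} {l k : ℕ} (hlk : l ≤ k) (h : ∀ m, l ≤ m → m < k → b (m + 1) ≤ a m) :
    ∑ m ∈ Icc (l + 1) k, b m + a k ≤ ∑ m ∈ Icc l k, a m := by
  induction k, hlk using Nat.le_induction with
  | base => simp
  | succ k hlk ih =>
    rw [sum_Icc_succ_top (by omega), sum_Icc_succ_top (by omega), add_assoc]
    calc ∑ m ∈ Icc (l + 1) k, b m + (b (k + 1) + a (k + 1))
        ≤ ∑ m ∈ Icc (l + 1) k, b m + (a k + a (k + 1)) := by gcongr; exact h k hlk (by omega)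
      _ ≤ ∑ m ∈ Icc l k, a m + a (k + 1) := by
        rw [← add_assoc]; gcongr; exact ih fun m hlm hmk => h m hlm (by omega)

end Intervals

namespace Maj

variable {N : ℕ} {a b : ℕ → ℝ}

theorem sum_Icc_le (h : Maj N a b) {k : ℕ} (hk : k ≤ N) :
    ∑ m ∈ Icc 1 k, b m ≤ ∑ m ∈ Icc 1 k, a m := by
  rcases Nat.eq_zero_or_pos k with rfl | hk0
  · simp
  rcases hk.lt_or_eq with hkN | rfl
  · exact h.1 k hk0 hkN
  · exact h.2.ge

theorem sum_Icc_succ_le (h : Maj N a b) {i : ℕ} (hi : i ≤ N) :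
    ∑ m ∈ Icc (i + 1) N, a m ≤ ∑ m ∈ Icc (i + 1) N, b m := by
  have ha := sum_Icc_add_sum_Icc_succ a (by omega : 1 ≤ i + 1) hi
  have hb := sum_Icc_add_sum_Icc_succ b (by omega : 1 ≤ i + 1) hi
  linarith [h.2, h.sum_Icc_le hi]

end Maj

theorem sum_Icc_succ_le_add_of_sum_eq {N j : ℕ} {α β μ : ℕ → ℝ}
    (hβ : ∑ m ∈ Icc 1 (N + 1), β m = ∑ m ∈ Icc 1 (N + 1), μ m)
    (hα : ∑ m ∈ Icc 1 N, α m = ∑ m ∈ Icc 1 N, μ m)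
    (hle : ∀ m, 1 ≤ m → m ≤ j → α m ≤ β m) (hj : j ≤ N) :
    ∑ m ∈ Icc (j + 1) (N + 1), β m ≤ ∑ m ∈ Icc (j + 1) N, α m + μ (N + 1) := by
  have hhead : ∑ m ∈ Icc 1 j, α m ≤ ∑ m ∈ Icc 1 j, β m :=
    sum_le_sum fun m hm => hle m (mem_Icc.1 hm).1 (mem_Icc.1 hm).2
  have hsplitβ := sum_Icc_add_sum_Icc_succ β (by omega : 1 ≤ j + 1) (by omega : j ≤ N + 1)
  have hsplitα := sum_Icc_add_sum_Icc_succ α (by omega : 1 ≤ j + 1) hj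
  have hμ := sum_Icc_succ_top (by omega : 1 ≤ N + 1) μ
  linarith

theorem eigenstep_bounds_necessary_general (n : ℕ) (β μ : ℕ → ℝ)
    (hmajβ : Maj n β μ)
    (α : ℕ → ℝ)
    (hmajα : Maj (n - 1) α μ)
    (hint : ∀ m, 1 ≤ m → m ≤ n - 1 → β (m + 1) ≤ α m ∧ α m ≤ β m) :
    ∀ k, 1 ≤ k → k ≤ n - 1 →
      (max (β (k + 1))
        (∑ m ∈ Finset.Icc k n, β m - ∑ m ∈ Finset.Icc (k + 1) (n - 1), α m - μ n)
        ≤ α k) ∧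
      α k ≤ β k ∧
      (∀ l, 1 ≤ l → l ≤ k →
        α k ≤ ∑ m ∈ Finset.Icc l (n - 1), μ m - ∑ m ∈ Finset.Icc (l + 1) k, β m
              - ∑ m ∈ Finset.Icc (k + 1) (n - 1), α m) := by
  intro k hk hkn
  obtain ⟨N, rfl⟩ : ∃ N, n = N + 1 := ⟨n - 1, by omega⟩
  rw [Nat.add_sub_cancel] at hmajα hint hkn ⊢
  refine ⟨max_le (hint k hk hkn).1 ?_, (hint k hk hkn).2, fun l hl hlk => ?_⟩
  · have hsplit : α k + ∑ m ∈ Icc (k + 1) N, α m = ∑ m ∈ Icc k N, α m := by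
      rw [Icc_add_one_left_eq_Ioc]; exact add_sum_Ioc_eq_sum_Icc hkn
    obtain ⟨j, rfl⟩ : ∃ j, k = j + 1 := ⟨k - 1, by omega⟩
    have hlower := sum_Icc_succ_le_add_of_sum_eq (j := j) hmajβ.2 hmajα.2
      (fun m hm hmj => (hint m hm (by omega)).2) (by omega)
    linarith
  · obtain ⟨i, rfl⟩ : ∃ i, l = i + 1 := ⟨l - 1, by omega⟩
    have hinterlace := sum_Icc_succ_add_le_sum_Icc (a := α) (b := β) hlk
      fun m hm hmk => (hint m (by omega) (by omega)).1
    have hsplit := sum_Icc_add_sum_Icc_succ α (by omega : i + 1 ≤ k + 1) hkn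
    have htail := hmajα.sum_Icc_succ_le (by omega : i ≤ N)
    linarith

/-- if `{β_m}_{m=1}^n ≽ {μ_m}_{m=1}^n`, `{α_m}_{m=1}^{n-1} ≽
{μ_m}_{m=1}^{n-1}` and `{α_m}` interlaces on `{β_m}`, then each `α_k` lies in
`[A_k, B_k]`.  (Here `A_k ≤ α_k` is stated via the binary `max`, and
`α_k ≤ B_k = min{β_k, min_{l=1,…,k} (…)}` is stated as the equivalent
conjunction `α_k ≤ β_k ∧ ∀ l ∈ {1,…,k}, α_k ≤ …`.) -/
theorem eigenstep_bounds_necessary (n : ℕ) (hn : 2 ≤ n) (β μ : ℕ → ℝ)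
    (hβ_anti : ∀ m, 1 ≤ m → m + 1 ≤ n → β (m + 1) ≤ β m)
    (hμ_anti : ∀ m, 1 ≤ m → m + 1 ≤ n → μ (m + 1) ≤ μ m)
    (hmajβ : Maj n β μ)
    (α : ℕ → ℝ)
    (hmajα : Maj (n - 1) α μ)
    (hint : ∀ m, 1 ≤ m → m ≤ n - 1 → β (m + 1) ≤ α m ∧ α m ≤ β m) :
    ∀ k, 1 ≤ k → k ≤ n - 1 →
      (max (β (k + 1))
        (∑ m ∈ Finset.Icc k n, β m - ∑ m ∈ Finset.Icc (k + 1) (n - 1), α m - μ n)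
        ≤ α k) ∧
      α k ≤ β k ∧
      (∀ l, 1 ≤ l → l ≤ k →
        α k ≤ ∑ m ∈ Finset.Icc l (n - 1), μ m - ∑ m ∈ Finset.Icc (l + 1) k, β m
              - ∑ m ∈ Finset.Icc (k + 1) (n - 1), α m) :=
  eigenstep_bounds_necessary_general n β μ hmajβ α hmajα hint
end

section
/- Let n ≥ 2, let {β_m}_{m=1}^n and {μ_m}_{m=1}^n be nonincreasing real sequences with {β_m}_{m=1}^n ≽ {μ_m}_{m=1}^n, and let {α_m}_{m=1}^{n−1} be real numbers such that for every k = 1,…,n−1 one has A_k ≤ α_k ≤ B_k, where A_k := max{ β_{k+1}, Σ_{m=k}^{n} β_m − Σ_{m=k+1}^{n−1} α_m − μ_n } and B_k := min{ β_k, min_{l=1,…,k} ( Σ_{m=l}^{n−1} μ_m − Σ_{m=l+1}^{k} β_m − Σ_{m=k+1}^{n−1} α_m ) }, with sums over empty index sets equal to zero. Then {α_m}_{m=1}^{n−1} interlaces on {β_m}_{m=1}^{n} and {α_m}_{m=1}^{n−1} majorizes {μ_m}_{m=1}^{n−1}. -/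
/-- if `{β_m}_{m=1}^n ≽ {μ_m}_{m=1}^n` and every `α_k` lies in
`[A_k, B_k]` (with `A_k ≤ α_k` stated via the binary `max`, and
`α_k ≤ B_k = min{β_k, min_{l=1,…,k} (…)}` stated as the equivalent conjunction),
then `{α_m}_{m=1}^{n-1}` interlaces on `{β_m}_{m=1}^{n}` and
`{α_m}_{m=1}^{n-1} ≽ {μ_m}_{m=1}^{n-1}`. -/
theorem eigenstep_bounds_sufficient (n : ℕ) (hn : 2 ≤ n) (β μ : ℕ → ℝ)
    (hβ_anti : ∀ m, 1 ≤ m → m + 1 ≤ n → β (m + 1) ≤ β m)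
    (hμ_anti : ∀ m, 1 ≤ m → m + 1 ≤ n → μ (m + 1) ≤ μ m)
    (hmajβ : Maj n β μ)
    (α : ℕ → ℝ)
    (hbounds : ∀ k, 1 ≤ k → k ≤ n - 1 →
      (max (β (k + 1))
        (∑ m ∈ Finset.Icc k n, β m - ∑ m ∈ Finset.Icc (k + 1) (n - 1), α m - μ n)
        ≤ α k) ∧
      α k ≤ β k ∧
      (∀ l, 1 ≤ l → l ≤ k →
        α k ≤ ∑ m ∈ Finset.Icc l (n - 1), μ m - ∑ m ∈ Finset.Icc (l + 1) k, β m
              - ∑ m ∈ Finset.Icc (k + 1) (n - 1), α m)) :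
    (∀ m, 1 ≤ m → m ≤ n - 1 → β (m + 1) ≤ α m ∧ α m ≤ β m) ∧
    Maj (n - 1) α μ := by

  have hn1 : 1 ≤ n - 1 := by omega
  have hIccsplit : ∀ k m : ℕ, k ≤ m → Finset.Icc k m = insert k (Finset.Icc (k+1) m) := by
    intro k m h; ext x
    simp only [Finset.mem_Icc, Finset.mem_insert]; omega
  have hIoc : ∀ a b : ℕ, Finset.Icc (a+1) b = Finset.Ioc a b := by
    intro a b; ext x; simp only [Finset.mem_Icc, Finset.mem_Ioc]; omega
  -- tail bound: sums of α over Icc k (n-1) are ≤ sums of μ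
  have hT : ∀ k, 1 ≤ k → k ≤ n - 1 →
      ∑ m ∈ Finset.Icc k (n-1), α m ≤ ∑ m ∈ Finset.Icc k (n-1), μ m := by
    intro k hk1 hk2
    have h := (hbounds k hk1 hk2).2.2 k hk1 le_rfl
    have hemp : ∑ m ∈ Finset.Icc (k+1) k, β m = 0 := by
      rw [Finset.Icc_eq_empty (by omega)]; simp
    have e1 : ∑ m ∈ Finset.Icc k (n-1), α m
        = α k + ∑ m ∈ Finset.Icc (k+1) (n-1), α m := by
      rw [hIccsplit k (n-1) hk2, Finset.sum_insert (by simp)]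
    linarith
  -- lower bound on the full sum of α
  have hge : ∑ m ∈ Finset.Icc 1 (n-1), μ m ≤ ∑ m ∈ Finset.Icc 1 (n-1), α m := by
    have h := le_trans (le_max_right _ _) (hbounds 1 le_rfl hn1).1
    have e1 : ∑ m ∈ Finset.Icc 1 (n-1), α m
        = α 1 + ∑ m ∈ Finset.Icc (1+1) (n-1), α m := by
      rw [hIccsplit 1 (n-1) hn1, Finset.sum_insert (by simp)]
    have e2 : ∑ m ∈ Finset.Icc 1 n, μ m
        = ∑ m ∈ Finset.Icc 1 (n-1), μ m + μ n := by
      have h' : n - 1 + 1 = n := by omega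
      rw [← h', Finset.sum_Icc_succ_top (by omega)]; simp
    have e3 := hmajβ.2
    rw [show (1:ℕ)+1 = 2 from rfl] at e1
    linarith
  have hlek : ∑ m ∈ Finset.Icc 1 (n-1), α m ≤ ∑ m ∈ Finset.Icc 1 (n-1), μ m :=
    hT 1 le_rfl hn1
  constructor
  · intro m hm1 hm2
    exact ⟨le_trans (le_max_left _ _) (hbounds m hm1 hm2).1, (hbounds m hm1 hm2).2.1⟩
  constructor
  · intro k hk1 hk2
    have hsplit : ∑ m ∈ Finset.Icc 1 k, α m + ∑ m ∈ Finset.Icc (k+1) (n-1), α m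
        = ∑ m ∈ Finset.Icc 1 (n-1), α m := by
      rw [show (1:ℕ) = 0 + 1 from rfl, hIoc, hIoc, hIoc]
      exact Finset.sum_Ioc_consecutive _ (by omega) (by omega)
    have hsplitμ : ∑ m ∈ Finset.Icc 1 k, μ m + ∑ m ∈ Finset.Icc (k+1) (n-1), μ m
        = ∑ m ∈ Finset.Icc 1 (n-1), μ m := by
      rw [show (1:ℕ) = 0 + 1 from rfl, hIoc, hIoc, hIoc]
      exact Finset.sum_Ioc_consecutive _ (by omega) (by omega)
    have ht := hT (k+1) (by omega) (by omega)
    linarith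
  · exact le_antisymm hlek hge
end

section
/- Let n ≥ 2, let {β_m}_{m=1}^n and {μ_m}_{m=1}^n be nonincreasing real sequences with {β_m}_{m=1}^n ≽ {μ_m}_{m=1}^n. Fix k ∈ {1,…,n−1} and suppose real numbers α_{n−1}, α_{n−2}, …, α_{k+1} are chosen consecutively (in order of decreasing index j, from j = n−1 down to j = k+1) so that A_j ≤ α_j ≤ B_j for each such j, where A_j := max{ β_{j+1}, Σ_{m=j}^{n} β_m − Σ_{m=j+1}^{n−1} α_m − μ_n } and B_j := min{ β_j, min_{l=1,…,j} ( Σ_{m=l}^{n−1} μ_m − Σ_{m=l+1}^{j} β_m − Σ_{m=j+1}^{n−1} α_m ) }, with sums over empty index sets equal to zero. Then A_k ≤ B_k, i.e., the interval [A_k, B_k] from which α_k is to be chosen is nonempty. -/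
/-- if `α_{n-1}, …, α_{k+1}` are consecutively chosen to satisfy
the eigenstep bounds `A_j ≤ α_j ≤ B_j` (the bound `A_j ≤ α_j` stated via the
binary `max`, and `α_j ≤ B_j` stated as the equivalent conjunction over
`l = 1, …, j`), then `A_k ≤ B_k`, i.e. the interval `[A_k, B_k]` from which
`α_k` is to be chosen is nonempty.  The conclusion `A_k ≤ B_k` is stated as
the equivalent conjunction `A_k ≤ β_k ∧ ∀ l ∈ {1,…,k}, A_k ≤ …`. -/
theorem eigenstep_interval_nonempty (n : ℕ) (hn : 2 ≤ n) (β μ : ℕ → ℝ)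
    (hβ_anti : ∀ m, 1 ≤ m → m + 1 ≤ n → β (m + 1) ≤ β m)
    (hμ_anti : ∀ m, 1 ≤ m → m + 1 ≤ n → μ (m + 1) ≤ μ m)
    (hmajβ : Maj n β μ)
    (k : ℕ) (hk1 : 1 ≤ k) (hk2 : k ≤ n - 1)
    (α : ℕ → ℝ)
    (hbounds : ∀ j, k + 1 ≤ j → j ≤ n - 1 →
      (max (β (j + 1))
        (∑ m ∈ Finset.Icc j n, β m - ∑ m ∈ Finset.Icc (j + 1) (n - 1), α m - μ n)
        ≤ α j) ∧
      α j ≤ β j ∧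
      (∀ l, 1 ≤ l → l ≤ j →
        α j ≤ ∑ m ∈ Finset.Icc l (n - 1), μ m - ∑ m ∈ Finset.Icc (l + 1) j, β m
              - ∑ m ∈ Finset.Icc (j + 1) (n - 1), α m)) :
    (max (β (k + 1))
      (∑ m ∈ Finset.Icc k n, β m - ∑ m ∈ Finset.Icc (k + 1) (n - 1), α m - μ n)
      ≤ β k) ∧
    (∀ l, 1 ≤ l → l ≤ k →
      max (β (k + 1))
        (∑ m ∈ Finset.Icc k n, β m - ∑ m ∈ Finset.Icc (k + 1) (n - 1), α m - μ n)
        ≤ ∑ m ∈ Finset.Icc l (n - 1), μ m - ∑ m ∈ Finset.Icc (l + 1) k, β m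
          - ∑ m ∈ Finset.Icc (k + 1) (n - 1), α m) := by
  obtain ⟨N, rfl⟩ : ∃ N, n = N + 2 := ⟨n - 2, by omega⟩
  simp only [show N + 2 - 1 = N + 1 by omega] at hk2 hbounds ⊢
  have hT : ∑ m ∈ Finset.Icc 1 (N+2), β m = ∑ m ∈ Finset.Icc 1 (N+2), μ m := hmajβ.2
  have hpre : ∀ t, t ≤ N + 1 → ∑ m ∈ Finset.Icc 1 t, μ m ≤ ∑ m ∈ Finset.Icc 1 t, β m := by
    intro t ht
    rcases Nat.eq_zero_or_pos t with h | h
    · simp [h]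
    · exact hmajβ.1 t h (by omega)
  have hβmono : ∀ a b, 1 ≤ a → a ≤ b → b ≤ N + 2 → β b ≤ β a := by
    intro a b ha hab hb
    induction b with
    | zero => omega
    | succ b ih =>
      rcases eq_or_lt_of_le hab with h | h
      · rw [← h]
      · exact le_trans (hβ_anti b (by omega) (by omega)) (ih (by omega) (by omega))
  have hμmono : ∀ a b, 1 ≤ a → a ≤ b → b ≤ N + 2 → μ b ≤ μ a := by
    intro a b ha hab hb
    induction b with
    | zero => omega
    | succ b ih =>
      rcases eq_or_lt_of_le hab with h | h
      · rw [← h]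
      · exact le_trans (hμ_anti b (by omega) (by omega)) (ih (by omega) (by omega))
  have hbot : ∀ (f : ℕ → ℝ) a b, a ≤ b →
      ∑ m ∈ Finset.Icc a b, f m = f a + ∑ m ∈ Finset.Icc (a+1) b, f m := by
    intro f a b hab
    rw [Finset.Icc_eq_cons_Ioc hab, Finset.sum_cons, Finset.Icc_add_one_left_eq_Ioc]
  have hcons : ∀ (f : ℕ → ℝ) a b c, a ≤ b → b ≤ c →
      (∑ m ∈ Finset.Icc (a+1) b, f m) + ∑ m ∈ Finset.Icc (b+1) c, f m
        = ∑ m ∈ Finset.Icc (a+1) c, f m := by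
    intro f a b c hab hbc
    rw [Finset.Icc_add_one_left_eq_Ioc, Finset.Icc_add_one_left_eq_Ioc, Finset.Icc_add_one_left_eq_Ioc]
    exact Finset.sum_Ioc_consecutive f hab hbc
  have hsuffix : ∀ (f : ℕ → ℝ) t, t ≤ N + 2 →
      (∑ m ∈ Finset.Icc 1 t, f m) + ∑ m ∈ Finset.Icc (t+1) (N+2), f m
        = ∑ m ∈ Finset.Icc 1 (N+2), f m := by
    intro f t ht
    have h := hcons f 0 t (N+2) (by omega) ht
    simpa using h
  have hβμn : β (N+2) ≤ μ (N+2) := by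
    have h1 := hpre (N+1) (le_refl _)
    have h2 : ∑ m ∈ Finset.Icc 1 (N+2), β m = (∑ m ∈ Finset.Icc 1 (N+1), β m) + β (N+2) :=
      Finset.sum_Icc_succ_top (by omega) _
    have h3 : ∑ m ∈ Finset.Icc 1 (N+2), μ m = (∑ m ∈ Finset.Icc 1 (N+1), μ m) + μ (N+2) :=
      Finset.sum_Icc_succ_top (by omega) _
    linarith
  have hP : ∀ l, 1 ≤ l → l ≤ k →
      β k + ∑ m ∈ Finset.Icc (l+1) (N+2), β m ≤ ∑ m ∈ Finset.Icc l (N+2), μ m := by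
    intro l hl1 hlk
    obtain ⟨t, rfl⟩ : ∃ t, l = t + 1 := ⟨l - 1, by omega⟩
    have hsβ := hsuffix β (t+1) (by omega)
    have hsμ := hsuffix μ (t+1) (by omega)
    have hbμ := hbot μ (t+1) (N+2) (by omega)
    have htβ : ∑ m ∈ Finset.Icc 1 (t+1), β m = (∑ m ∈ Finset.Icc 1 t, β m) + β (t+1) :=
      Finset.sum_Icc_succ_top (by omega) _
    have htμ : ∑ m ∈ Finset.Icc 1 (t+1), μ m = (∑ m ∈ Finset.Icc 1 t, μ m) + μ (t+1) :=
      Finset.sum_Icc_succ_top (by omega) _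
    have h1 := hpre t (by omega)
    have h2 := hβmono (t+1) k (by omega) hlk (by omega)
    linarith [hT]
  have hQ : ∀ l, 1 ≤ l → l ≤ N + 1 →
      (∑ m ∈ Finset.Icc (l+1) (N+2), β m) + μ (N+2) ≤ ∑ m ∈ Finset.Icc l (N+2), μ m := by
    intro l hl1 hl2
    obtain ⟨t, rfl⟩ : ∃ t, l = t + 1 := ⟨l - 1, by omega⟩
    have hsβ := hsuffix β (t+1) (by omega)
    have hsμ := hsuffix μ (t+1) (by omega)
    have hbμ := hbot μ (t+1) (N+2) (by omega)
    have htμ : ∑ m ∈ Finset.Icc 1 (t+1), μ m = (∑ m ∈ Finset.Icc 1 t, μ m) + μ (t+1) :=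
      Finset.sum_Icc_succ_top (by omega) _
    have h1 := hpre (t+1) (by omega)
    have h2 := hμmono (t+1) (N+2) (by omega) (by omega) (le_refl _)
    linarith [hT]
  have hI : ∑ m ∈ Finset.Icc (k+1) (N+2), β m - μ (N+2)
      ≤ ∑ m ∈ Finset.Icc (k+1) (N+1), α m := by
    rcases eq_or_lt_of_le hk2 with hke | hkl
    · subst hke
      simp only [show N + 1 + 1 = N + 2 by omega]
      have he : Finset.Icc (N+2) (N+1) = (∅ : Finset ℕ) := Finset.Icc_eq_empty (by omega)
      rw [he, Finset.Icc_self]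
      simp
      linarith [hβμn]
    · obtain ⟨hA, -, -⟩ := hbounds (k+1) (le_refl _) (by omega)
      have h1 : ∑ m ∈ Finset.Icc (k+1) (N+2), β m - ∑ m ∈ Finset.Icc (k+2) (N+1), α m
          - μ (N+2) ≤ α (k+1) := le_trans (le_max_right _ _) hA
      have h2 := hbot α (k+1) (N+1) (by omega)
      linarith
  have hII : ∀ l, 1 ≤ l → l ≤ k →
      β (k+1) + (∑ m ∈ Finset.Icc (l+1) k, β m) + (∑ m ∈ Finset.Icc (k+1) (N+1), α m)
        ≤ ∑ m ∈ Finset.Icc l (N+1), μ m := by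
    intro l hl1 hlk
    rcases eq_or_lt_of_le hk2 with hke | hkl
    · subst hke
      simp only [show N + 1 + 1 = N + 2 by omega]
      have he : Finset.Icc (N+2) (N+1) = (∅ : Finset ℕ) := Finset.Icc_eq_empty (by omega)
      rw [he]
      have hq := hQ l hl1 (by omega)
      have hb2 : ∑ m ∈ Finset.Icc (l+1) (N+2), β m
          = (∑ m ∈ Finset.Icc (l+1) (N+1), β m) + β (N+2) :=
        Finset.sum_Icc_succ_top (by omega) _
      have hb3 : ∑ m ∈ Finset.Icc l (N+2), μ m
          = (∑ m ∈ Finset.Icc l (N+1), μ m) + μ (N+2) :=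
        Finset.sum_Icc_succ_top (by omega) _
      simp
      linarith
    · obtain ⟨-, -, h3⟩ := hbounds (k+1) (le_refl _) (by omega)
      have hα3 := h3 l hl1 (by omega)
      have htop : ∑ m ∈ Finset.Icc (l+1) (k+1), β m
          = (∑ m ∈ Finset.Icc (l+1) k, β m) + β (k+1) :=
        Finset.sum_Icc_succ_top (by omega) _
      have hbS := hbot α (k+1) (N+1) (by omega)
      linarith
  have hsplitk : ∑ m ∈ Finset.Icc k (N+2), β m
      = β k + ∑ m ∈ Finset.Icc (k+1) (N+2), β m := hbot β k (N+2) (by omega)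
  constructor
  · apply max_le
    · exact hβ_anti k hk1 (by omega)
    · linarith [hI, hsplitk]
  · intro l hl1 hlk
    apply max_le
    · linarith [hII l hl1 hlk]
    · have hp := hP l hl1 hlk
      have hc := hcons β l k (N+2) ?_ ?_
      · have hm : ∑ m ∈ Finset.Icc l (N+2), μ m
            = (∑ m ∈ Finset.Icc l (N+1), μ m) + μ (N+2) :=
          Finset.sum_Icc_succ_top (by omega) _
        linarith
      · omega
      · omega
end

section
/- Let {λ_n}_{n=1}^N and {μ_n}_{n=1}^N be nonnegative nonincreasing real sequences with {λ_n}_{n=1}^N ≽ {μ_n}_{n=1}^N. A doubly-indexed family {{λ_{n;m}}_{m=1}^n}_{n=1}^N of real numbers with λ_{N;m} = λ_m for all m = 1,…,N is a sequence of inner eigensteps if and only if for every n = N,…,2 and every k = n−1,…,1 one has A_{n−1;k} ≤ λ_{n−1;k} ≤ B_{n−1;k}, where A_{n−1;k} := max{ λ_{n;k+1}, Σ_{m=k}^{n} λ_{n;m} − Σ_{m=k+1}^{n−1} λ_{n−1;m} − μ_n } and B_{n−1;k} := min{ λ_{n;k}, min_{l=1,…,k} ( Σ_{m=l}^{n−1}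 μ_m − Σ_{m=l+1}^{k} λ_{n;m} − Σ_{m=k+1}^{n−1} λ_{n−1;m} ) }, with sums over empty index sets equal to zero. -/
private lemma sum_split (f : ℕ → ℝ) {a b c : ℕ} (ha : 1 ≤ a) (h1 : a ≤ b + 1) (h2 : b ≤ c) :
    ∑ m ∈ Finset.Icc a c, f m
      = ∑ m ∈ Finset.Icc a b, f m + ∑ m ∈ Finset.Icc (b + 1) c, f m := by
  have e : a = (a - 1) + 1 := by omega
  rw [e, Finset.Icc_add_one_left_eq_Ioc, Finset.Icc_add_one_left_eq_Ioc, Finset.Icc_add_one_left_eq_Ioc,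
    Finset.sum_Ioc_consecutive f (by omega : a - 1 ≤ b) h2]

private lemma sum_shift (f : ℕ → ℝ) (a b : ℕ) :
    ∑ m ∈ Finset.Icc (a + 1) (b + 1), f (m - 1) = ∑ m ∈ Finset.Icc a b, f m := by
  rw [← Finset.map_add_right_Icc a b 1, Finset.sum_map]
  simp [addRightEmbedding]

/-- Prefix sums of each row of an eigenstep table dominate those of `mu`. -/
private lemma claimC (N : ℕ) (mu : ℕ → ℝ) (L : ℕ → ℕ → ℝ)
    (h2 : ∀ n, 2 ≤ n → n ≤ N → ∀ m, 1 ≤ m → m ≤ n - 1 →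
      L n (m + 1) ≤ L (n - 1) m ∧ L (n - 1) m ≤ L n m)
    (h3 : ∀ n, 1 ≤ n → n ≤ N →
      ∑ m ∈ Finset.Icc 1 n, L n m = ∑ m ∈ Finset.Icc 1 n, mu m)
    (j : ℕ) :
    ∀ r, j ≤ r → 1 ≤ r → r ≤ N →
      ∑ m ∈ Finset.Icc 1 j, mu m ≤ ∑ m ∈ Finset.Icc 1 j, L r m := by
  rcases Nat.eq_zero_or_pos j with hj | hj
  · intro r _ _ _; subst hj; simp
  · intro r hr
    induction r, hr using Nat.le_induction with
    | base => intro _ hN; rw [h3 j hj hN]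
    | succ r hjr ih =>
      intro _ hN
      refine le_trans (ih (by omega) (by omega)) (Finset.sum_le_sum ?_)
      intro m hm
      obtain ⟨hm1, hm2⟩ := Finset.mem_Icc.mp hm
      have h := (h2 (r + 1) (by omega) hN m hm1 (by omega)).2
      simpa using h

/-- a doubly-indexed family with top row `lam` is a sequence of
inner eigensteps iff every entry `λ_{n-1;k}` lies in `[A_{n-1;k}, B_{n-1;k}]`.
(The bound `A_{n-1;k} ≤ λ_{n-1;k}` is stated via the binary `max`, and
`λ_{n-1;k} ≤ B_{n-1;k}` as the equivalent conjunction over `l = 1, …, k`.) -/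
theorem inner_eigensteps_iff_bounds (N : ℕ) (lam mu : ℕ → ℝ)
    (hlam_nonneg : ∀ m, 1 ≤ m → m ≤ N → 0 ≤ lam m)
    (hlam_anti : ∀ m, 1 ≤ m → m + 1 ≤ N → lam (m + 1) ≤ lam m)
    (hmu_nonneg : ∀ m, 1 ≤ m → m ≤ N → 0 ≤ mu m)
    (hmu_anti : ∀ m, 1 ≤ m → m + 1 ≤ N → mu (m + 1) ≤ mu m)
    (hmaj : Maj N lam mu)
    (L : ℕ → ℕ → ℝ) (hLN : ∀ m, 1 ≤ m → m ≤ N → L N m = lam m) :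
    IsInnerEigensteps N lam mu L ↔
    (∀ n, 2 ≤ n → n ≤ N → ∀ k, 1 ≤ k → k ≤ n - 1 →
      (max (L n (k + 1))
        (∑ m ∈ Finset.Icc k n, L n m
          - ∑ m ∈ Finset.Icc (k + 1) (n - 1), L (n - 1) m - mu n)
        ≤ L (n - 1) k) ∧
      L (n - 1) k ≤ L n k ∧
      (∀ l, 1 ≤ l → l ≤ k →
        L (n - 1) k ≤ ∑ m ∈ Finset.Icc l (n - 1), mu m
          - ∑ m ∈ Finset.Icc (l + 1) k, L n m
          - ∑ m ∈ Finset.Icc (k + 1) (n - 1), L (n - 1) m)) := by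
  constructor
  · rintro ⟨h1, h2, h3⟩
    intro n hn2 hnN k hk1 hk
    have tn : ∑ m ∈ Finset.Icc 1 n, L n m = ∑ m ∈ Finset.Icc 1 n, mu m :=
      h3 n (by omega) hnN
    have tn1 : ∑ m ∈ Finset.Icc 1 (n - 1), L (n - 1) m
        = ∑ m ∈ Finset.Icc 1 (n - 1), mu m := h3 (n - 1) (by omega) (by omega)
    have E3 : ∑ m ∈ Finset.Icc k (n - 1), L (n - 1) m
        = L (n - 1) k + ∑ m ∈ Finset.Icc (k + 1) (n - 1), L (n - 1) m := by
      have h := sum_split (L (n - 1)) (a := k) (b := k) (c := n - 1)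
        hk1 (by omega) (by omega)
      rwa [Finset.Icc_self, Finset.sum_singleton] at h
    have E6 : ∑ m ∈ Finset.Icc 1 n, mu m
        = ∑ m ∈ Finset.Icc 1 (n - 1), mu m + mu n := by
      have h := sum_split mu (a := 1) (b := n - 1) (c := n)
        le_rfl (by omega) (by omega)
      rwa [show n - 1 + 1 = n by omega, Finset.Icc_self, Finset.sum_singleton] at h
    refine ⟨max_le (h2 n hn2 hnN k hk1 hk).1 ?_, (h2 n hn2 hnN k hk1 hk).2, ?_⟩
    · -- lower bound A via traces
      have E1 : ∑ m ∈ Finset.Icc 1 n, L n m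
          = ∑ m ∈ Finset.Icc 1 (k - 1), L n m + ∑ m ∈ Finset.Icc k n, L n m := by
        have h := sum_split (L n) (a := 1) (b := k - 1) (c := n)
          le_rfl (by omega) (by omega)
        rwa [show k - 1 + 1 = k by omega] at h
      have E2 : ∑ m ∈ Finset.Icc 1 (n - 1), L (n - 1) m
          = ∑ m ∈ Finset.Icc 1 (k - 1), L (n - 1) m
            + ∑ m ∈ Finset.Icc k (n - 1), L (n - 1) m := by
        have h := sum_split (L (n - 1)) (a := 1) (b := k - 1) (c := n - 1)
          le_rfl (by omega) (by omega)
        rwa [show k - 1 + 1 = k by omega] at h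
      have T : ∑ m ∈ Finset.Icc 1 (k - 1), L (n - 1) m
          ≤ ∑ m ∈ Finset.Icc 1 (k - 1), L n m := by
        refine Finset.sum_le_sum ?_
        intro m hm
        obtain ⟨hm1, hm2⟩ := Finset.mem_Icc.mp hm
        exact (h2 n hn2 hnN m hm1 (by omega)).2
      linarith
    · -- upper bounds B
      intro l hl1 hlk
      have S1 : ∑ m ∈ Finset.Icc 1 (n - 1), L (n - 1) m
          = ∑ m ∈ Finset.Icc 1 (l - 1), L (n - 1) m
            + ∑ m ∈ Finset.Icc l (n - 1), L (n - 1) m := by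
        have h := sum_split (L (n - 1)) (a := 1) (b := l - 1) (c := n - 1)
          le_rfl (by omega) (by omega)
        rwa [show l - 1 + 1 = l by omega] at h
      have S2a : ∑ m ∈ Finset.Icc l (n - 1), L (n - 1) m
          = ∑ m ∈ Finset.Icc l (k - 1), L (n - 1) m
            + ∑ m ∈ Finset.Icc k (n - 1), L (n - 1) m := by
        have h := sum_split (L (n - 1)) (a := l) (b := k - 1) (c := n - 1)
          hl1 (by omega) (by omega)
        rwa [show k - 1 + 1 = k by omega] at h
      have S3 : ∑ m ∈ Finset.Icc (l + 1) k, L n m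
          ≤ ∑ m ∈ Finset.Icc l (k - 1), L (n - 1) m := by
        have hsh := sum_shift (fun m => L (n - 1) m) l (k - 1)
        rw [show k - 1 + 1 = k by omega] at hsh
        rw [← hsh]
        refine Finset.sum_le_sum ?_
        intro m hm
        obtain ⟨hm1, hm2⟩ := Finset.mem_Icc.mp hm
        have h := (h2 n hn2 hnN (m - 1) (by omega) (by omega)).1
        rwa [show m - 1 + 1 = m by omega] at h
      have S5 : ∑ m ∈ Finset.Icc 1 (n - 1), mu m
          = ∑ m ∈ Finset.Icc 1 (l - 1), mu m
            + ∑ m ∈ Finset.Icc l (n - 1), mu m := by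
        have h := sum_split mu (a := 1) (b := l - 1) (c := n - 1)
          le_rfl (by omega) (by omega)
        rwa [show l - 1 + 1 = l by omega] at h
      have S6 : ∑ m ∈ Finset.Icc 1 (l - 1), mu m
          ≤ ∑ m ∈ Finset.Icc 1 (l - 1), L (n - 1) m :=
        claimC N mu L h2 h3 (l - 1) (n - 1) (by omega) (by omega) (by omega)
      linarith
  · intro hB
    refine ⟨hLN, ?_, ?_⟩
    · intro n hn2 hnN m hm1 hm
      obtain ⟨hmax, hright, -⟩ := hB n hn2 hnN m hm1 hm
      exact ⟨le_trans (le_max_left _ _) hmax, hright⟩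
    · have base : ∑ m ∈ Finset.Icc 1 N, L N m = ∑ m ∈ Finset.Icc 1 N, mu m := by
        rw [Finset.sum_congr rfl fun m hm =>
          hLN m (Finset.mem_Icc.mp hm).1 (Finset.mem_Icc.mp hm).2]
        exact hmaj.2
      have step : ∀ n, 2 ≤ n → n ≤ N →
          (∑ m ∈ Finset.Icc 1 n, L n m = ∑ m ∈ Finset.Icc 1 n, mu m) →
          ∑ m ∈ Finset.Icc 1 (n - 1), L (n - 1) m
            = ∑ m ∈ Finset.Icc 1 (n - 1), mu m := by
        intro n hn2 hnN tn
        obtain ⟨hmax, -, hupper⟩ := hB n hn2 hnN 1 le_rfl (by omega)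
        have hA : ∑ m ∈ Finset.Icc 1 n, L n m
            - ∑ m ∈ Finset.Icc 2 (n - 1), L (n - 1) m - mu n ≤ L (n - 1) 1 :=
          le_trans (le_max_right _ _) hmax
        have hU := hupper 1 le_rfl le_rfl
        rw [show Finset.Icc 2 1 = (∅ : Finset ℕ) from Finset.Icc_eq_empty (by omega),
          Finset.sum_empty] at hU
        have Esplit : ∑ m ∈ Finset.Icc 1 (n - 1), L (n - 1) m
            = L (n - 1) 1 + ∑ m ∈ Finset.Icc 2 (n - 1), L (n - 1) m := by
          have h := sum_split (L (n - 1)) (a := 1) (b := 1) (c := n - 1)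
            le_rfl (by omega) (by omega)
          rwa [Finset.Icc_self, Finset.sum_singleton] at h
        have E6 : ∑ m ∈ Finset.Icc 1 n, mu m
            = ∑ m ∈ Finset.Icc 1 (n - 1), mu m + mu n := by
          have h := sum_split mu (a := 1) (b := n - 1) (c := n)
            le_rfl (by omega) (by omega)
          rwa [show n - 1 + 1 = n by omega, Finset.Icc_self, Finset.sum_singleton] at h
        linarith
      intro n hn1 hnN
      have key : ∀ d, d ≤ N - 1 →
          ∑ m ∈ Finset.Icc 1 (N - d), L (N - d) m
            = ∑ m ∈ Finset.Icc 1 (N - d), mu m := by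
        intro d
        induction d with
        | zero => intro _; simpa using base
        | succ d ih =>
          intro hd
          have h := step (N - d) (by omega) (by omega) (ih (by omega))
          rwa [show N - d - 1 = N - (d + 1) by omega] at h
      have h := key (N - n) (by omega)
      rwa [show N - (N - n) = n by omega] at h
end

section
/- Let {λ_n}_{n=1}^N and {μ_n}_{n=1}^N be nonnegative nonincreasing real sequences, and let M ≤ N be such that λ_n = 0 for every n > M. If {{λ_{n;m}}_{m=1}^M}_{n=0}^N is a sequence of outer eigensteps for {λ_m}_{m=1}^M and {μ_n}_{n=1}^N, then the family obtained by setting λ_{n;m} := 0 for all indices with M < m ≤ n is a sequence of inner eigensteps {{λ_{n;m}}_{m=1}^n}_{n=1}^N for {λ_n}_{n=1}^N and {μ_n}_{n=1}^N. -/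
/-- `L` is a sequence of outer eigensteps for `{lam_m}_{m=1}^M`, `{mu_n}_{n=1}^N`. -/
def IsOuterEigensteps (M N : ℕ) (lam mu : ℕ → ℝ) (L : ℕ → ℕ → ℝ) : Prop :=
  (∀ m, 1 ≤ m → m ≤ M → L 0 m = 0) ∧
  (∀ m, 1 ≤ m → m ≤ M → L N m = lam m) ∧
  (∀ n, 1 ≤ n → n ≤ N →
    (L (n - 1) M ≤ L n M ∧
     ∀ m, 1 ≤ m → m ≤ M - 1 →
       L n (m + 1) ≤ L (n - 1) m ∧ L (n - 1) m ≤ L n m)) ∧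
  (∀ n, 1 ≤ n → n ≤ N →
    ∑ m ∈ Finset.Icc 1 M, L n m = ∑ m ∈ Finset.Icc 1 n, mu m)

/-- zero-padding a sequence of outer eigensteps (for the
spectrum `{λ_m}_{m=1}^M`, where `λ_n = 0` for `n > M`) yields a sequence of
inner eigensteps for `{λ_n}_{n=1}^N`. -/
theorem outer_to_inner_eigensteps (M N : ℕ) (hMN : M ≤ N) (lam mu : ℕ → ℝ)
    (hlam_nonneg : ∀ m, 1 ≤ m → m ≤ N → 0 ≤ lam m)
    (hlam_anti : ∀ m, 1 ≤ m → m + 1 ≤ N → lam (m + 1) ≤ lam m)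
    (hlam_zero : ∀ m, M < m → m ≤ N → lam m = 0)
    (hmu_nonneg : ∀ m, 1 ≤ m → m ≤ N → 0 ≤ mu m)
    (hmu_anti : ∀ m, 1 ≤ m → m + 1 ≤ N → mu (m + 1) ≤ mu m)
    (L : ℕ → ℕ → ℝ) (hL : IsOuterEigensteps M N lam mu L) :
    IsInnerEigensteps N lam mu (fun n m => if m ≤ M then L n m else 0) := by
  obtain ⟨h0, hNL, hint, hsum⟩ := hL
  -- A: the last column is nonnegative
  have hA : ∀ n, n ≤ N → 1 ≤ M → 0 ≤ L n M := by
    intro n hn hM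
    induction n with
    | zero => rw [h0 M hM le_rfl]
    | succ k ih =>
      have h := (hint (k + 1) (by omega) hn).1
      rw [Nat.add_sub_cancel] at h
      exact le_trans (ih (by omega)) h
  -- B: each row is nonincreasing
  have hB : ∀ n, n ≤ N → ∀ m, 1 ≤ m → m + 1 ≤ M → L n (m + 1) ≤ L n m := by
    intro n hn m h1 h2
    cases n with
    | zero => rw [h0 m h1 (by omega), h0 (m + 1) (by omega) h2]
    | succ k =>
      have h := (hint (k + 1) (by omega) hn).2 m h1 (by omega)
      rw [Nat.add_sub_cancel] at h
      exact le_trans h.1 h.2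
  have hmono : ∀ n, n ≤ N → ∀ m1 m2, 1 ≤ m1 → m1 ≤ m2 → m2 ≤ M → L n m2 ≤ L n m1 := by
    intro n hn m1 m2 h1 h12 h2
    induction m2, h12 using Nat.le_induction with
    | base => exact le_rfl
    | succ m2 hm ih =>
      exact le_trans (hB n hn m2 (by omega) (by omega)) (ih (by omega))
  -- C: entries above the diagonal vanish
  have hCle : ∀ n, n ≤ N → ∀ m, n < m → m ≤ M → L n m ≤ 0 := by
    intro n
    induction n with
    | zero => intro hn m h1 h2; rw [h0 m (by omega) h2]
    | succ k ih =>
      intro hn m h1 h2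
      have hm2 : 2 ≤ m := by omega
      have h := (hint (k + 1) (by omega) hn).2 (m - 1) (by omega) (by omega)
      rw [Nat.add_sub_cancel, Nat.sub_add_cancel (by omega)] at h
      exact le_trans h.1 (ih (by omega) (m - 1) (by omega) (by omega))
  have hzero : ∀ n, n ≤ N → ∀ m, n < m → m ≤ M → L n m = 0 := by
    intro n hn m h1 h2
    refine le_antisymm (hCle n hn m h1 h2) ?_
    exact le_trans (hA n hn (by omega)) (hmono n hn m M (by omega) h2 le_rfl)
  refine ⟨?_, ?_, ?_⟩
  · intro m h1 h2
    by_cases hm : m ≤ M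
    · simp only [if_pos hm]; exact hNL m h1 hm
    · simp only [if_neg hm]
      rw [hlam_zero m (by omega) h2]
  · intro n hn2 hnN m h1 h2
    by_cases hm1 : m + 1 ≤ M
    · have h := (hint n (by omega) hnN).2 m h1 (by omega)
      simp only [if_pos hm1, if_pos (by omega : m ≤ M)]
      exact h
    · by_cases hm : m ≤ M
      · have hmM : m = M := by omega
        simp only [if_neg hm1, if_pos hm]
        subst hmM
        exact ⟨hA (n - 1) (by omega) (by omega), (hint n (by omega) hnN).1⟩
      · simp only [if_neg hm1, if_neg hm]
        exact ⟨le_rfl, le_rfl⟩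
  · intro n hn1 hn2
    by_cases hMn : M ≤ n
    · calc ∑ m ∈ Finset.Icc 1 n, (if m ≤ M then L n m else 0)
          = ∑ m ∈ (Finset.Icc 1 n).filter (· ≤ M), L n m := (Finset.sum_filter _ _).symm
        _ = ∑ m ∈ Finset.Icc 1 M, L n m := by
            congr 1
            ext x
            simp only [Finset.mem_filter, Finset.mem_Icc]
            omega
        _ = ∑ m ∈ Finset.Icc 1 n, mu m := hsum n hn1 hn2
    · have h1 : ∀ x ∈ Finset.Icc 1 n, (if x ≤ M then L n x else 0) = L n x := by
        intro x hx
        simp only [Finset.mem_Icc] at hx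
        rw [if_pos (by omega)]
      rw [Finset.sum_congr rfl h1]
      have h2 : ∑ m ∈ Finset.Icc 1 n, L n m = ∑ m ∈ Finset.Icc 1 M, L n m := by
        refine Finset.sum_subset (Finset.Icc_subset_Icc_right (by omega)) ?_
        intro x hx hnx
        simp only [Finset.mem_Icc] at hx hnx
        exact hzero n hn2 x (by omega) (by omega)
      rw [h2, hsum n hn1 hn2]
end
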